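/- Let φ be a monotonic nonessential enhancement of site percolation on the square lattice ℤ² and fix s ∈ [0,1]. Assume there is a continuous function F : (0,∞) → ℝ such that for all b,h > 0 the crossing probabilities of independent critical site percolation satisfy lim_{δ→0} φ_δ(b,h) = F(b/h). Then for all b,h > 0 the crossing probabilities of the enhanced process satisfy lim_{δ→0} φ̂_δ(b,h) = F(b/h). -/

import Mathlib

open MeasureTheory Filter Set Topology
open scoped ENNReal

namespace PercEnh

/-- Sites of the lattice (vertex set `ℤ²`). -/
abbrev Site : Type := ℤ × ℤ

/-- A configuration: the set of open sites. -/
abbrev Config : Type := Set Site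

/-- Square-lattice (`ℤ²`-) adjacency: `‖x − y‖₁ = 1`. -/
def adjZ2 (x y : Site) : Prop := |x.1 - y.1| + |x.2 - y.2| = 1

/-- Matching (star) adjacency: `x ≠ y` and `‖x − y‖_∞ = 1`. -/
def adjStar (x y : Site) : Prop := x ≠ y ∧ max |x.1 - y.1| |x.2 - y.2| = 1

/-- Euclidean norm of a site. -/
noncomputable def siteNorm (x : Site) : ℝ := Real.sqrt ((x.1 : ℝ) ^ 2 + (x.2 : ℝ) ^ 2)

/-- Sites in the closed Euclidean ball of radius `r` centred at the origin. -/
def siteBall (r : ℝ) : Set Site := {x | siteNorm x ≤ r}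

/-- The shifted configuration `τ_x ω = {y − x : y ∈ ω}`. -/
def shiftConfig (x : Site) (ω : Config) : Config := {y | y + x ∈ ω}

/-- An enhancement function of (finite) range `R₀`: takes values in subsets of
`𝔹₀ = ℤ² ∩ B(R₀)` and depends only on the restriction of the configuration to `𝔹₀`. -/
def IsEnhancement (R₀ : ℝ) (φ : Config → Config) : Prop :=
  0 ≤ R₀ ∧ (∀ ω, φ ω ⊆ siteBall R₀) ∧
    ∀ ω ω' : Config, ω ∩ siteBall R₀ = ω' ∩ siteBall R₀ → φ ω = φ ω'

/-- A monotonic enhancement function. -/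
def Monotonic (φ : Config → Config) : Prop := ∀ ω ω' : Config, ω ⊆ ω' → φ ω ⊆ φ ω'

/-- The translate `φ_x(ω) = x + φ₀(τ_x ω)`. -/
def enhAt (φ : Config → Config) (x : Site) (ω : Config) : Config :=
  (fun z => z + x) '' φ (shiftConfig x ω)

/-- The enhanced configuration `ω̂(ω, α) = ω ∪ ⋃_{x : α(x)=1} φ_x(ω)`. -/
def enhanced (φ : Config → Config) (ω : Config) (α : Site → Bool) : Config :=
  ω ∪ {y | ∃ x, α x = true ∧ y ∈ enhAt φ x ω}

/-- The fully (deterministically, with `s = 1`) enhanced configuration `ω̃`. -/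
def fullyEnhanced (φ : Config → Config) (ω : Config) : Config :=
  ω ∪ {y | ∃ x, y ∈ enhAt φ x ω}

/-- `ω` contains a doubly-infinite self-repelling path (w.r.t. adjacency `adj`):
a two-sided sequence of distinct sites of `ω` in which exactly the consecutive
pairs are adjacent. -/
def HasDISRPath (adj : Site → Site → Prop) (ω : Config) : Prop :=
  ∃ γ : ℤ → Site, Function.Injective γ ∧ (∀ i, γ i ∈ ω) ∧
    ∀ i j : ℤ, adj (γ i) (γ j) ↔ (j = i + 1 ∨ i = j + 1)

/-- The enhancement is essential: some configuration without a doubly-infinite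
self-repelling path acquires one upon enhancement at the origin. -/
def Essential (adj : Site → Site → Prop) (φ : Config → Config) : Prop :=
  ∃ ω : Config, ¬ HasDISRPath adj ω ∧ HasDISRPath adj (ω ∪ φ ω)

/-- A (finite, nonempty) path w.r.t. adjacency `adj`: distinct sites,
consecutive ones adjacent. -/
def IsPathOn (adj : Site → Site → Prop) (l : List Site) : Prop :=
  l ≠ [] ∧ l.Nodup ∧ l.Chain' adj

/-- `x` and `y` are joined by a path of sites of `ω`. -/
def ConnectedIn (adj : Site → Site → Prop) (ω : Config) (x y : Site) : Prop :=
  ∃ l : List Site, IsPathOn adj l ∧ (∀ z ∈ l, z ∈ ω) ∧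
    l.head? = some x ∧ l.getLast? = some y

/-- `x` belongs to an infinite open cluster of `ω`. -/
def InInfiniteCluster (adj : Site → Site → Prop) (ω : Config) (x : Site) : Prop :=
  {y | ConnectedIn adj ω x y}.Infinite

/-- `ω` contains an infinite open cluster. -/
def HasInfiniteCluster (adj : Site → Site → Prop) (ω : Config) : Prop :=
  ∃ x, InInfiniteCluster adj ω x

/-- The configuration corresponding to `η : Site → Bool`. -/
def toConfig (η : Site → Bool) : Config := {x | η x = true}

/-- A cylinder event. -/
def cylinder (F : Finset Site) (b : Site → Bool) : Set (Site → Bool) :=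
  {η | ∀ x ∈ F, η x = b x}

/-- `μ` is the Bernoulli product measure with density `p` of open sites. -/
def IsBernoulli (p : ℝ) (μ : Measure (Site → Bool)) : Prop :=
  IsProbabilityMeasure μ ∧
    ∀ (F : Finset Site) (b : Site → Bool),
      μ (cylinder F b) = ∏ x ∈ F, ENNReal.ofReal (if b x then p else 1 - p)

/-- The percolation probability `θ`: the probability that the origin lies in an
infinite open cluster. -/
noncomputable def theta (adj : Site → Site → Prop) (μ : Measure (Site → Bool)) : ℝ :=
  (μ {η | InInfiniteCluster adj (toConfig η) 0}).toReal

/-- The percolation probability of the enhanced process (`μ` the law of the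
configuration, `ν` the law of the activation variables). -/
noncomputable def thetaEnh (adj : Site → Site → Prop) (φ : Config → Config)
    (μ ν : Measure (Site → Bool)) : ℝ :=
  ((μ.prod ν) {ηα | InInfiniteCluster adj (enhanced φ (toConfig ηα.1) ηα.2) 0}).toReal

/-- The critical point `p_c = sup {p ∈ [0,1] : θ(p) = 0}` for the family `P`. -/
noncomputable def pcOf (adj : Site → Site → Prop) (P : ℝ → Measure (Site → Bool)) : ℝ :=
  sSup {p | p ∈ Icc (0:ℝ) 1 ∧ theta adj (P p) = 0}

/-- The connectivity function `τ_p(x)`. -/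
noncomputable def tau (adj : Site → Site → Prop) (μ : Measure (Site → Bool)) (x : Site) : ℝ :=
  (μ {η | ConnectedIn adj (toConfig η) 0 x}).toReal

/-- The connectivity function `τ_{p,s}(x)` of the enhanced process. -/
noncomputable def tauEnh (adj : Site → Site → Prop) (φ : Config → Config)
    (μ ν : Measure (Site → Bool)) (x : Site) : ℝ :=
  ((μ.prod ν) {ηα | ConnectedIn adj (enhanced φ (toConfig ηα.1) ηα.2) 0 x}).toReal

/-- The mean cluster size `χ(p) = E_p‖C‖ = ∑_x τ_p(x)`. -/
noncomputable def chi (adj : Site → Site → Prop) (μ : Measure (Site → Bool)) : ℝ≥0∞ :=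
  ∑' x : Site, μ {η | ConnectedIn adj (toConfig η) 0 x}

/-- The mean cluster size of the enhanced process. -/
noncomputable def chiEnh (adj : Site → Site → Prop) (φ : Config → Config)
    (μ ν : Measure (Site → Bool)) : ℝ≥0∞ :=
  ∑' x : Site, (μ.prod ν) {ηα | ConnectedIn adj (enhanced φ (toConfig ηα.1) ηα.2) 0 x}


/-- The open rectangle `R(b,h) = (−b/2, b/2) × (−h/2, h/2)`. -/
def rectR (b h : ℝ) : Set (ℝ × ℝ) :=
  {w | -(b / 2) < w.1 ∧ w.1 < b / 2 ∧ -(h / 2) < w.2 ∧ w.2 < h / 2}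

/-- The top side `[−b/2, b/2] × {h/2}`. -/
def topSide (b h : ℝ) : Set (ℝ × ℝ) := {w | |w.1| ≤ b / 2 ∧ w.2 = h / 2}

/-- The bottom side `[−b/2, b/2] × {−h/2}`. -/
def botSide (b h : ℝ) : Set (ℝ × ℝ) := {w | |w.1| ≤ b / 2 ∧ w.2 = -(h / 2)}

/-- The line segment from `u` to `v` in `ℝ²`. -/
def seg (u v : ℝ × ℝ) : Set (ℝ × ℝ) :=
  {w | ∃ t : ℝ, 0 ≤ t ∧ t ≤ 1 ∧ w = (1 - t) • u + t • v}

/-- There is an open vertical crossing of `R(b,h)` in the configuration `ω`, with the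
lattice embedded in the plane via `emb`: an open path `x₀, x₁, …, x_m, x_{m+1}` with
the (embedded) intermediate sites in `R(b,h)`, the segment from `x₀` to `x₁` touching
the top side and the segment from `x_m` to `x_{m+1}` touching the bottom side. -/
def VertCrossing (adj : Site → Site → Prop) (emb : Site → ℝ × ℝ) (ω : Config)
    (b h : ℝ) : Prop :=
  ∃ (n : ℕ) (x : ℕ → Site), 1 ≤ n ∧
    (∀ i ≤ n, adj (x i) (x (i + 1))) ∧
    (∀ i ≤ n + 1, ∀ j ≤ n + 1, x i = x j → i = j) ∧
    (∀ i ≤ n + 1, x i ∈ ω) ∧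
    (∀ i, 1 ≤ i → i ≤ n → emb (x i) ∈ rectR b h) ∧
    (seg (emb (x 0)) (emb (x 1)) ∩ topSide b h).Nonempty ∧
    (seg (emb (x n)) (emb (x (n + 1))) ∩ botSide b h).Nonempty

/-- Crossing probability `φ_δ(b,h)` (with `emb` the mesh-`δ` embedding). -/
noncomputable def crossProb (adj : Site → Site → Prop) (emb : Site → ℝ × ℝ)
    (μ : Measure (Site → Bool)) (b h : ℝ) : ℝ :=
  (μ {η | VertCrossing adj emb (toConfig η) b h}).toReal

/-- Crossing probability `φ̂_δ(b,h)` of the enhanced process. -/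
noncomputable def crossProbEnh (adj : Site → Site → Prop) (φ : Config → Config)
    (emb : Site → ℝ × ℝ) (μ ν : Measure (Site → Bool)) (b h : ℝ) : ℝ :=
  ((μ.prod ν) {ηα | VertCrossing adj emb (enhanced φ (toConfig ηα.1) ηα.2) b h}).toReal

/-- The embedding of the square lattice `ℤ²` at mesh `δ`. -/
noncomputable def embedSq (δ : ℝ) (x : Site) : ℝ × ℝ := (δ * (x.1 : ℝ), δ * (x.2 : ℝ))

/-! ### Basic adjacency lemmas -/

lemma adjZ2_iff' (x y : Site) : adjZ2 x y ↔
    (x.2 = y.2 ∧ (x.1 = y.1 + 1 ∨ y.1 = x.1 + 1)) ∨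
    (x.1 = y.1 ∧ (x.2 = y.2 + 1 ∨ y.2 = x.2 + 1)) := by
  unfold adjZ2
  rw [Int.abs_eq_natAbs, Int.abs_eq_natAbs]
  omega

lemma adjZ2_symm {x y : Site} (h : adjZ2 x y) : adjZ2 y x := by
  rw [adjZ2_iff'] at h ⊢; omega

lemma not_adjZ2_self (x : Site) : ¬ adjZ2 x x := by
  rw [adjZ2_iff']; omega

lemma adjZ2_shift {a b x : Site} : adjZ2 (a - x) (b - x) ↔ adjZ2 a b := by
  rw [adjZ2_iff', adjZ2_iff', Prod.fst_sub, Prod.fst_sub, Prod.snd_sub, Prod.snd_sub]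
  omega

/-- Build a doubly-infinite self-repelling path from a step/self-repelling function. -/
lemma mkDISR {W : Config} (f : ℤ → Site) (hinj : Function.Injective f)
    (hmem : ∀ i, f i ∈ W)
    (hstep : ∀ i, adjZ2 (f i) (f (i + 1)))
    (hsr : ∀ i j, i + 2 ≤ j → ¬ adjZ2 (f i) (f j)) :
    HasDISRPath adjZ2 W := by
  refine ⟨f, hinj, hmem, fun i j => ⟨fun hadj => ?_, fun hc => ?_⟩⟩
  · by_contra hc
    push_neg at hc
    rcases lt_trichotomy i j with h | h | h
    · have : i + 2 ≤ j := by omega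
      exact hsr i j this hadj
    · exact not_adjZ2_self (f i) (h ▸ hadj)
    · have : j + 2 ≤ i := by omega
      exact hsr j i this (adjZ2_symm hadj)
  · rcases hc with h | h
    · subst h; exact hstep i
    · subst h; exact adjZ2_symm (hstep j)

lemma DISR_unshift {x : Site} {W : Config} (h : HasDISRPath adjZ2 (shiftConfig x W)) :
    HasDISRPath adjZ2 W := by
  obtain ⟨γ, hinj, hmem, hiff⟩ := h
  refine ⟨fun i => γ i + x, fun i j hij => hinj ?_, fun i => hmem i, fun i j => ?_⟩
  · have h2 : γ i + x = γ j + x := hij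
    exact by simpa using congrArg (fun w => w - x) h2
  · have h3 : adjZ2 (γ i + x) (γ j + x) ↔ adjZ2 (γ i) (γ j) := by
      constructor
      · intro h4
        have := (@adjZ2_shift (γ i + x) (γ j + x) x).mpr h4
        simpa using this
      · intro h4
        have := (@adjZ2_shift (γ i + x) (γ j + x) x).mp (by simpa using h4)
        exact this
    rw [h3]; exact hiff i j

/-! ### Coordinates and balls -/

lemma coord_abs_le_of_norm {z : Site} {r : ℝ} (h : siteNorm z ≤ r) :
    |((z.1 : ℤ) : ℝ)| ≤ r ∧ |((z.2 : ℤ) : ℝ)| ≤ r := by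
  unfold siteNorm at h
  constructor
  · calc |((z.1 : ℤ) : ℝ)| = Real.sqrt (((z.1:ℤ):ℝ) ^ 2) := (Real.sqrt_sq_eq_abs _).symm
      _ ≤ Real.sqrt (((z.1:ℤ):ℝ) ^ 2 + ((z.2:ℤ):ℝ) ^ 2) := Real.sqrt_le_sqrt (le_add_of_nonneg_right (sq_nonneg _))
      _ ≤ r := h
  · calc |((z.2 : ℤ) : ℝ)| = Real.sqrt (((z.2:ℤ):ℝ) ^ 2) := (Real.sqrt_sq_eq_abs _).symm
      _ ≤ Real.sqrt (((z.1:ℤ):ℝ) ^ 2 + ((z.2:ℤ):ℝ) ^ 2) := Real.sqrt_le_sqrt (le_add_of_nonneg_left (sq_nonneg _))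
      _ ≤ r := h

lemma finite_box (M N : ℝ) : {z : Site | |((z.1:ℤ):ℝ)| ≤ M ∧ |((z.2:ℤ):ℝ)| ≤ N}.Finite := by
  have hsub : {z : Site | |((z.1:ℤ):ℝ)| ≤ M ∧ |((z.2:ℤ):ℝ)| ≤ N} ⊆
      (Finset.Icc (-(⌈M⌉)) ⌈M⌉ ×ˢ Finset.Icc (-(⌈N⌉)) ⌈N⌉ : Finset (ℤ × ℤ)) := by
    rintro ⟨a, b⟩ ⟨h1, h2⟩
    simp only [Finset.coe_product, Set.mem_prod, Finset.mem_coe, Finset.mem_Icc]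
    rw [abs_le] at h1 h2
    refine ⟨⟨?_, ?_⟩, ?_, ?_⟩
    · have hM : (-(⌈M⌉:ℤ) : ℝ) ≤ (a:ℝ) := by
        push_cast
        nlinarith [Int.le_ceil M, h1.1]
      exact_mod_cast hM
    · have hM2 : (a:ℝ) ≤ ((⌈M⌉:ℤ):ℝ) := le_trans h1.2 (Int.le_ceil M)
      exact_mod_cast hM2
    · have hN : (-(⌈N⌉:ℤ) : ℝ) ≤ (b:ℝ) := by
        push_cast
        nlinarith [Int.le_ceil N, h2.1]
      exact_mod_cast hN
    · have hN2 : (b:ℝ) ≤ ((⌈N⌉:ℤ):ℝ) := le_trans h2.2 (Int.le_ceil N)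
      exact_mod_cast hN2
  exact Set.Finite.subset (Finset.finite_toSet _) hsub

lemma siteBall_finite (r : ℝ) : (siteBall r).Finite := by
  apply (finite_box r r).subset
  intro z hz
  exact coord_abs_le_of_norm hz

/-! ### Enhancement algebra -/

/-- Union of enhancements over a set of activation sites. -/
def Esets (φ : Config → Config) (ω : Config) (A : Set Site) : Config :=
  {y | ∃ a ∈ A, y ∈ enhAt φ a ω}

lemma mem_enhAt {φ : Config → Config} {x ω y} :
    y ∈ enhAt φ x ω ↔ y - x ∈ φ (shiftConfig x ω) := by
  unfold enhAt
  constructor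
  · rintro ⟨z, hz, rfl⟩; simpa using hz
  · intro hz; exact ⟨y - x, hz, by simp⟩

lemma enhAt_mono_local {R₀ : ℝ} {φ : Config → Config} (hφ : IsEnhancement R₀ φ)
    (hmono : Monotonic φ) (x : Site) {ω ω' : Config}
    (h : ∀ w, w ∈ ω → w - x ∈ siteBall R₀ → w ∈ ω') :
    enhAt φ x ω ⊆ enhAt φ x ω' := by
  intro y hy
  rw [mem_enhAt] at hy ⊢
  have h1 : φ (shiftConfig x ω) = φ (shiftConfig x ω ∩ siteBall R₀) := by
    apply hφ.2.2
    rw [Set.inter_assoc, Set.inter_self]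
  have h2 : shiftConfig x ω ∩ siteBall R₀ ⊆ shiftConfig x ω' := by
    rintro z ⟨hz1, hz2⟩
    have : (z + x) - x ∈ siteBall R₀ := by simpa using hz2
    exact h (z + x) hz1 this
  rw [h1] at hy
  exact hmono _ _ h2 hy

/-! ### Good paths -/

/-- A finite lattice path `q 0, …, q m` in `W`, staying in a box of (lattice-unit)
half-widths `Mf, Nf`, starting at height `≥ h/(2δ)` and ending at height `≤ -h/(2δ)`. -/
def GoodF (W : Config) (δ h Mf Nf : ℝ) (q : ℕ → Site) (m : ℕ) : Prop :=
  (∀ i, i < m → adjZ2 (q i) (q (i + 1))) ∧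
  (∀ i, i ≤ m → ∀ j, j ≤ m → q i = q j → i = j) ∧
  (∀ i, i ≤ m → q i ∈ W) ∧
  (∀ i, i ≤ m → |(((q i).1 : ℤ) : ℝ)| ≤ Mf ∧ |(((q i).2 : ℤ) : ℝ)| ≤ Nf) ∧
  h / 2 ≤ δ * (((q 0).2 : ℤ) : ℝ) ∧ δ * (((q m).2 : ℤ) : ℝ) ≤ -(h / 2)

/-- Shortest-path extraction: from a chain with fixed endpoints inside `Q`, obtain a
self-repelling injective chain with the same endpoints inside `Q`. -/
lemma shortcut (Q : Set Site) (u v : Site) (q : ℕ → Site) (m : ℕ)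
    (hchain : ∀ i, i < m → adjZ2 (q i) (q (i + 1))) (h0 : q 0 = u) (hm : q m = v)
    (hmem : ∀ i, i ≤ m → q i ∈ Q) :
    ∃ (p : ℕ → Site) (k : ℕ),
      (∀ i, i < k → adjZ2 (p i) (p (i + 1))) ∧ p 0 = u ∧ p k = v ∧
      (∀ i, i ≤ k → p i ∈ Q) ∧
      (∀ i, i ≤ k → ∀ j, j ≤ k → p i = p j → i = j) ∧
      (∀ i j, i + 2 ≤ j → j ≤ k → ¬ adjZ2 (p i) (p j)) := by
  classical
  set PP : ℕ → Prop := fun k => ∃ p : ℕ → Site,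
    (∀ i, i < k → adjZ2 (p i) (p (i + 1))) ∧ p 0 = u ∧ p k = v ∧
    (∀ i, i ≤ k → p i ∈ Q) with hPP
  have hex : ∃ k, PP k := ⟨m, q, hchain, h0, hm, hmem⟩
  obtain ⟨p, hc, hp0, hpk, hpm⟩ : PP (Nat.find hex) := Nat.find_spec hex
  set k := Nat.find hex with hk
  have key : ∀ i j, i < j → j ≤ k → p i ≠ p j := by
    intro i j hij hjk heq
    have hshort : PP (k - (j - i)) := by
      refine ⟨fun t => if t ≤ i then p t else p (t + (j - i)), ?_, ?_, ?_, ?_⟩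
      · intro t ht
        rcases Nat.lt_trichotomy t i with h1 | h1 | h1
        · simp only [if_pos (by omega : t ≤ i), if_pos (by omega : t + 1 ≤ i)]
          exact hc t (by omega)
        · simp only [if_pos (le_of_eq h1), if_neg (by omega : ¬ t + 1 ≤ i)]
          have h2 : t + 1 + (j - i) = j + 1 := by omega
          rw [h2, h1, heq]
          exact hc j (by omega)
        · simp only [if_neg (by omega : ¬ t ≤ i), if_neg (by omega : ¬ t + 1 ≤ i)]
          have : t + 1 + (j - i) = (t + (j - i)) + 1 := by omega
          rw [this]
          exact hc (t + (j - i)) (by omega)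
      · simp only [if_pos (Nat.zero_le i)]; exact hp0
      · rcases Nat.lt_or_ge i (k - (j - i)) with h1 | h1
        · simp only [if_neg (by omega : ¬ k - (j - i) ≤ i)]
          have : k - (j - i) + (j - i) = k := by omega
          rw [this]; exact hpk
        · have hik : k - (j - i) = i := by omega
          have hjk' : j = k := by omega
          rw [hik]
          simp only [if_pos le_rfl]
          rw [heq, hjk']; exact hpk
      · intro t ht
        by_cases h1 : t ≤ i
        · simp only [if_pos h1]; exact hpm t (by omega)
        · simp only [if_neg h1]; exact hpm _ (by omega)
    exact Nat.find_min hex (by omega : k - (j - i) < k) hshort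
  have keysr : ∀ i j, i + 2 ≤ j → j ≤ k → ¬ adjZ2 (p i) (p j) := by
    intro i j hij hjk hadj
    have hshort : PP (k - (j - i) + 1) := by
      refine ⟨fun t => if t ≤ i then p t else p (t + (j - i - 1)), ?_, ?_, ?_, ?_⟩
      · intro t ht
        rcases Nat.lt_trichotomy t i with h1 | h1 | h1
        · simp only [if_pos (by omega : t ≤ i), if_pos (by omega : t + 1 ≤ i)]
          exact hc t (by omega)
        · simp only [if_pos (le_of_eq h1), if_neg (by omega : ¬ t + 1 ≤ i)]
          have h2 : t + 1 + (j - i - 1) = j := by omega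
          rw [h2, h1]
          exact hadj
        · simp only [if_neg (by omega : ¬ t ≤ i), if_neg (by omega : ¬ t + 1 ≤ i)]
          have : t + 1 + (j - i - 1) = (t + (j - i - 1)) + 1 := by omega
          rw [this]
          exact hc (t + (j - i - 1)) (by omega)
      · simp only [if_pos (Nat.zero_le i)]; exact hp0
      · simp only [if_neg (by omega : ¬ k - (j - i) + 1 ≤ i)]
        have : k - (j - i) + 1 + (j - i - 1) = k := by omega
        rw [this]; exact hpk
      · intro t ht
        by_cases h1 : t ≤ i
        · simp only [if_pos h1]; exact hpm t (by omega)
        · simp only [if_neg h1]; exact hpm _ (by omega)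
    exact Nat.find_min hex (by omega : k - (j - i) + 1 < k) hshort
  refine ⟨p, k, hc, hp0, hpk, hpm, ?_, keysr⟩
  intro i hi j hj heq
  by_contra hne
  rcases Nat.lt_or_ge i j with h1 | h1
  · exact key i j h1 hj heq
  · exact key j i (by omega) hi heq.symm

/-- Trimming a good path so that it starts at a maximal-height site and ends at a
minimal-height site. -/
lemma trim {W : Config} {δ h Mf Nf : ℝ} (hδ : 0 < δ) (hh : 0 < h) {q : ℕ → Site} {m : ℕ}
    (hq : GoodF W δ h Mf Nf q m) :
    ∃ (q' : ℕ → Site) (m' : ℕ), GoodF W δ h Mf Nf q' m' ∧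
      (∀ i, i ≤ m' → (q' i).2 ≤ (q' 0).2 ∧ (q' m').2 ≤ (q' i).2) ∧
      (∀ i, i ≤ m' → ∃ j, j ≤ m ∧ q' i = q j) := by
  obtain ⟨hc, hinj, hmem, hbox, htop, hbot⟩ := hq
  obtain ⟨a, ha, hamax⟩ := Finset.exists_max_image (Finset.range (m + 1))
    (fun i => (q i).2) ⟨0, by simp⟩
  obtain ⟨c, hcmem, hcmin⟩ := Finset.exists_min_image (Finset.range (m + 1))
    (fun i => (q i).2) ⟨0, by simp⟩
  rw [Finset.mem_range] at ha hcmem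
  have hamax' : ∀ j, j ≤ m → (q j).2 ≤ (q a).2 := fun j hj =>
    hamax j (Finset.mem_range.mpr (by omega))
  have hcmin' : ∀ j, j ≤ m → (q c).2 ≤ (q j).2 := fun j hj =>
    hcmin j (Finset.mem_range.mpr (by omega))
  have hq0pos : 0 < ((q 0).2 : ℝ) := by nlinarith
  have hqmneg : ((q m).2 : ℝ) < 0 := by nlinarith
  have h0a : ((q 0).2 : ℝ) ≤ ((q a).2 : ℝ) := by exact_mod_cast hamax' 0 (by omega)
  have hcm : ((q c).2 : ℝ) ≤ ((q m).2 : ℝ) := by exact_mod_cast hcmin' m le_rfl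
  have hac : (q c).2 < (q a).2 := by
    have h1 : (0:ℝ) < ((q a).2 : ℝ) := lt_of_lt_of_le hq0pos h0a
    have h2 : ((q c).2 : ℝ) < 0 := lt_of_le_of_lt hcm hqmneg
    exact_mod_cast h2.trans h1
  rcases Nat.lt_or_ge a c with hlt | hge
  · -- forward segment q (a+·)
    refine ⟨fun t => q (a + t), c - a, ⟨?_, ?_, ?_, ?_, ?_, ?_⟩, ?_, ?_⟩
    · intro i hi
      show adjZ2 (q (a + i)) (q (a + (i + 1)))
      have h2 : a + (i + 1) = (a + i) + 1 := by omega
      rw [h2]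
      exact hc (a + i) (by omega)
    · intro i hi j hj heq
      have := hinj (a + i) (by omega) (a + j) (by omega) heq
      omega
    · intro i hi; exact hmem _ (by omega)
    · intro i hi; exact hbox _ (by omega)
    · show h / 2 ≤ δ * (((q (a + 0)).2 : ℤ) : ℝ)
      rw [Nat.add_zero]
      calc h / 2 ≤ δ * ((q 0).2 : ℝ) := htop
        _ ≤ δ * ((q a).2 : ℝ) := by
            apply mul_le_mul_of_nonneg_left h0a hδ.le
    · show δ * (((q (a + (c - a))).2 : ℤ) : ℝ) ≤ -(h / 2)
      have h2 : a + (c - a) = c := by omega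
      rw [h2]
      calc δ * ((q c).2 : ℝ) ≤ δ * ((q m).2 : ℝ) := by
            apply mul_le_mul_of_nonneg_left hcm hδ.le
        _ ≤ -(h / 2) := hbot
    · intro i hi
      show (q (a + i)).2 ≤ (q (a + 0)).2 ∧ (q (a + (c - a))).2 ≤ (q (a + i)).2
      have h1 : a + (c - a) = c := by omega
      rw [h1, Nat.add_zero]
      exact ⟨hamax' _ (by omega), hcmin' _ (by omega)⟩
    · intro i hi; exact ⟨a + i, by omega, rfl⟩
  · -- reversed segment q (a-·)
    have hca : c < a := by
      rcases Nat.lt_or_ge c a with h1 | h1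
      · exact h1
      · have : a = c := by omega
        rw [this] at hac; omega
    refine ⟨fun t => q (a - t), a - c, ⟨?_, ?_, ?_, ?_, ?_, ?_⟩, ?_, ?_⟩
    · intro i hi
      show adjZ2 (q (a - i)) (q (a - (i + 1)))
      have h1 : a - i = (a - (i + 1)) + 1 := by omega
      apply adjZ2_symm
      rw [h1]
      exact hc (a - (i + 1)) (by omega)
    · intro i hi j hj heq
      have := hinj (a - i) (by omega) (a - j) (by omega) heq
      omega
    · intro i hi; exact hmem _ (by omega)
    · intro i hi; exact hbox _ (by omega)
    · show h / 2 ≤ δ * (((q (a - 0)).2 : ℤ) : ℝ)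
      rw [Nat.sub_zero]
      calc h / 2 ≤ δ * ((q 0).2 : ℝ) := htop
        _ ≤ δ * ((q a).2 : ℝ) := by
            apply mul_le_mul_of_nonneg_left h0a hδ.le
    · show δ * (((q (a - (a - c))).2 : ℤ) : ℝ) ≤ -(h / 2)
      have h1 : a - (a - c) = c := by omega
      rw [h1]
      calc δ * ((q c).2 : ℝ) ≤ δ * ((q m).2 : ℝ) := by
            apply mul_le_mul_of_nonneg_left hcm hδ.le
        _ ≤ -(h / 2) := hbot
    · intro i hi
      show (q (a - i)).2 ≤ (q (a - 0)).2 ∧ (q (a - (a - c))).2 ≤ (q (a - i)).2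
      have h1 : a - (a - c) = c := by omega
      rw [h1, Nat.sub_zero]
      exact ⟨hamax' _ (by omega), hcmin' _ (by omega)⟩
    · intro i hi; exact ⟨a - i, by omega, rfl⟩

/-! ### Tails of doubly infinite paths -/

lemma adjZ2_snd_close {a b : Site} (h : adjZ2 a b) : a.2 ≤ b.2 + 1 ∧ b.2 ≤ a.2 + 1 := by
  rw [adjZ2_iff'] at h
  omega

lemma adjZ2_col_step {a b : Site} (h : adjZ2 a b) (hc : a.1 = b.1) :
    b.2 = a.2 + 1 ∨ a.2 = b.2 + 1 := by
  rw [adjZ2_iff'] at h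
  omega

/-- Discrete intermediate value theorem for unit-step integer sequences. -/
lemma ivt_int (f : ℕ → ℤ) (hstep : ∀ n, f (n + 1) = f n + 1 ∨ f n = f (n + 1) + 1)
    (V : ℤ) (h0 : f 0 ≤ V) (hex : ∃ n, V ≤ f n) : ∃ n, f n = V := by
  classical
  set n₀ := Nat.find hex with hn₀
  have hsp : V ≤ f n₀ := Nat.find_spec hex
  rcases Nat.eq_zero_or_pos n₀ with h1 | h1
  · exact ⟨0, by rw [h1] at hsp; omega⟩
  · have hlt : f (n₀ - 1) < V := by
      by_contra hge
      exact Nat.find_min hex (by omega : n₀ - 1 < n₀) (by omega)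
    have := hstep (n₀ - 1)
    rw [Nat.sub_add_cancel h1] at this
    exact ⟨n₀, by omega⟩

/-- An injective sequence of sites in an upwards column escapes every height. -/
lemma escape (f : ℕ → Site) (hinj : Function.Injective f) (c base : ℤ)
    (hcol : ∀ n, (f n).1 = c ∧ base ≤ (f n).2) (V : ℤ) : ∃ n, V ≤ (f n).2 := by
  by_contra hno
  push_neg at hno
  have hsub : (Set.univ : Set ℕ) ⊆ f ⁻¹' ((({c} ×ˢ Finset.Ico base V : Finset (ℤ × ℤ))) : Set Site) := by
    intro n _
    simp only [Set.mem_preimage, Finset.coe_product, Set.mem_prod, Finset.mem_coe,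
      Finset.coe_singleton, Set.mem_singleton_iff, Finset.mem_Ico]
    exact ⟨(hcol n).1, (hcol n).2, hno n⟩
  have hfin : ((({c} ×ˢ Finset.Ico base V : Finset (ℤ × ℤ))) : Set Site).Finite :=
    Finset.finite_toSet _
  have : (Set.univ : Set ℕ).Finite :=
    Set.Finite.subset (Set.Finite.preimage hinj.injOn hfin) hsub
  exact Set.infinite_univ this

/-- A doubly infinite injective lattice path cannot have both tails in the same
upwards half-column. -/
lemma colContra (γ : ℤ → Site) (hinj : Function.Injective γ)
    (hadj : ∀ i, adjZ2 (γ i) (γ (i + 1))) (c base N : ℤ) (hN : 1 ≤ N)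
    (hcol : ∀ i, N ≤ i ∨ i ≤ -N → (γ i).1 = c ∧ base ≤ (γ i).2) : False := by
  set g : ℕ → Site := fun n => γ (N + n) with hg
  set g' : ℕ → Site := fun n => γ (-N - n) with hg'
  have hginj : Function.Injective g := fun a b hab => by
    have := hinj hab; omega
  have hg'inj : Function.Injective g' := fun a b hab => by
    have := hinj hab; omega
  have hgcol : ∀ n, (g n).1 = c ∧ base ≤ (g n).2 := fun n => hcol _ (by left; omega)
  have hg'col : ∀ n, (g' n).1 = c ∧ base ≤ (g' n).2 := fun n => hcol _ (by right; omega)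
  have hgstep : ∀ n, (g (n + 1)).2 = (g n).2 + 1 ∨ (g n).2 = (g (n + 1)).2 + 1 := by
    intro n
    have h1 : adjZ2 (g n) (g (n + 1)) := by
      have := hadj (N + n)
      have h2 : N + (n : ℤ) + 1 = N + ((n : ℤ) + 1) := by ring
      simpa [hg, h2] using this
    have := adjZ2_col_step h1 ((hgcol n).1.trans (hgcol (n + 1)).1.symm)
    omega
  have hg'step : ∀ n, (g' (n + 1)).2 = (g' n).2 + 1 ∨ (g' n).2 = (g' (n + 1)).2 + 1 := by
    intro n
    have h1 : adjZ2 (g' (n + 1)) (g' n) := by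
      have := hadj (-N - n - 1)
      have h2 : -N - ((n : ℕ) + 1 : ℕ) = -N - (n:ℤ) - 1 := by push_cast; ring
      show adjZ2 (γ (-N - ((n:ℕ) + 1 : ℕ))) (γ (-N - (n:ℤ)))
      rw [h2]
      rwa [show (-N - (n:ℤ) - 1 + 1) = -N - (n:ℤ) by ring] at this
    have := adjZ2_col_step h1 ((hg'col (n + 1)).1.trans (hg'col n).1.symm)
    omega
  set V : ℤ := max ((g 0).2) ((g' 0).2) with hV
  obtain ⟨n₁, hn₁⟩ := ivt_int (fun n => (g n).2) hgstep V (le_max_left _ _)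
    (escape g hginj c base hgcol V)
  obtain ⟨n₂, hn₂⟩ := ivt_int (fun n => (g' n).2) hg'step V (le_max_right _ _)
    (escape g' hg'inj c base hg'col V)
  have hsite : g n₁ = g' n₂ := by
    have h1 : (g n₁).1 = (g' n₂).1 := (hgcol n₁).1.trans (hg'col n₂).1.symm
    have h2 : (g n₁).2 = (g' n₂).2 := by
      have e1 : (g n₁).2 = V := hn₁
      have e2 : (g' n₂).2 = V := hn₂
      omega
    exact Prod.ext h1 h2
  have := hinj hsite
  omega

/-! ### Extraction of a good path from the doubly infinite path -/

lemma extract {R₀ : ℝ} {φ : Config → Config} (ω : Config) (A' : Set Site) (x u v : Site)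
    {δ h Mf Nf MA NA : ℝ} (hδ : 0 < δ) (hh : 0 < h)
    (hu2 : h / 2 ≤ δ * ((u.2 : ℤ) : ℝ)) (hv2 : δ * ((v.2 : ℤ) : ℝ) ≤ -(h / 2))
    (hupos : 1 ≤ u.2) (hvneg : v.2 ≤ -1)
    (hxA : |((x.1 : ℤ) : ℝ)| ≤ MA ∧ |((x.2 : ℤ) : ℝ)| ≤ NA)
    (hMA : MA + R₀ ≤ Mf) (hNA : NA + R₀ ≤ Nf)
    (SS : Set Site)
    (hSS : ∀ z ∈ SS, z ∈ ω ∪ Esets φ ω A' ∧ |((z.1 : ℤ) : ℝ)| ≤ Mf ∧ |((z.2 : ℤ) : ℝ)| ≤ Nf)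
    (γ : ℤ → Site) (hinj : Function.Injective γ)
    (hiff : ∀ i j : ℤ, adjZ2 (γ i) (γ j) ↔ (j = i + 1 ∨ i = j + 1))
    (hmem : ∀ i, γ i ∈ (SS ∪ (ω ∩ {w : Site | w - x ∈ siteBall R₀})) ∪
      ({w : Site | w.1 = u.1 ∧ u.2 < w.2} ∪ {w : Site | w.1 = v.1 ∧ w.2 < v.2}))
    (N : ℤ) (hN1 : 1 ≤ N)
    (hLow : ∀ i, i ≤ -N → γ i ∈ {w : Site | w.1 = u.1 ∧ u.2 < w.2})
    (hHigh : ∀ i, N ≤ i → γ i ∈ {w : Site | w.1 = v.1 ∧ w.2 < v.2}) :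
    ∃ q' m', GoodF (ω ∪ Esets φ ω A') δ h Mf Nf q' m' := by
  classical
  set RayU : Config := {w : Site | w.1 = u.1 ∧ u.2 < w.2} with hRayU
  set RayD : Config := {w : Site | w.1 = v.1 ∧ w.2 < v.2} with hRayD
  have noadjUD : ∀ a ∈ RayU, ∀ b ∈ RayD, ¬ adjZ2 a b := by
    intro a ha b hb hadj
    obtain ⟨h4, h5⟩ := adjZ2_snd_close hadj
    have h2 : u.2 < a.2 := ha.2
    have h3 : b.2 < v.2 := hb.2
    omega
  have hstepγ : ∀ i : ℤ, adjZ2 (γ i) (γ (i + 1)) := fun i => (hiff i (i+1)).mpr (Or.inl rfl)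
  -- greatest RayU index
  obtain ⟨iU, hiU, hiUmax⟩ := Int.exists_greatest_of_bdd
    (P := fun i => γ i ∈ RayU)
    ⟨N, by
      intro z hz
      by_contra hcon
      push_neg at hcon
      have := hHigh z (by omega)
      have h2 := hz.2
      have h3 := this.2
      omega⟩
    ⟨-N, hLow (-N) le_rfl⟩
  -- least RayD index above iU
  obtain ⟨iD, hiD, hiDmin⟩ := Int.exists_least_of_bdd
    (P := fun i => iU < i ∧ γ i ∈ RayD)
    ⟨iU + 1, by intro z hz; omega⟩
    ⟨max N (iU + 1), by
      constructor
      · omega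
      · exact hHigh _ (le_max_left _ _)⟩
  obtain ⟨hiDgt, hiDD⟩ := hiD
  -- gap of size at least 2
  have hgap : iU + 2 ≤ iD := by
    by_contra hcon
    push_neg at hcon
    have hiD1 : iD = iU + 1 := by omega
    exact noadjUD _ hiU _ hiDD (hiD1 ▸ hstepγ iU)
  -- middle sites
  have hmid : ∀ t, iU < t → t < iD → γ t ∈ SS ∪ (ω ∩ {w : Site | w - x ∈ siteBall R₀}) := by
    intro t h1 h2
    rcases hmem t with hin | hray
    · exact hin
    · exfalso
      rcases hray with hU | hD
      · have := hiUmax t hU; omega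
      · have := hiDmin t ⟨h1, hD⟩; omega
  -- endpoint heights
  have hy0 : u.2 ≤ (γ (iU + 1)).2 := by
    obtain ⟨h4, h5⟩ := adjZ2_snd_close (hstepγ iU)
    have := hiU.2
    omega
  have hym : (γ (iD - 1)).2 ≤ v.2 := by
    have hadj : adjZ2 (γ (iD - 1)) (γ iD) := (hiff (iD - 1) iD).mpr (Or.inl (by ring))
    obtain ⟨h4, h5⟩ := adjZ2_snd_close hadj
    have := hiDD.2
    omega
  -- the extracted path
  refine ⟨fun j => γ (iU + 1 + (j : ℤ)), (iD - iU - 2).toNat, ?_, ?_, ?_, ?_, ?_, ?_⟩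
  · intro j hj
    show adjZ2 (γ (iU + 1 + (j:ℤ))) (γ (iU + 1 + ((j+1 : ℕ) : ℤ)))
    have he : iU + 1 + ((j + 1 : ℕ) : ℤ) = (iU + 1 + (j:ℤ)) + 1 := by push_cast; ring
    rw [he]
    exact hstepγ _
  · intro i hi j hj he
    have := hinj he
    omega
  · intro j hj
    have hm := hmid (iU + 1 + (j:ℤ)) (by omega) (by omega)
    rcases hm with hS | hB
    · exact (hSS _ hS).1
    · exact Or.inl hB.1
  · intro j hj
    have hm := hmid (iU + 1 + (j:ℤ)) (by omega) (by omega)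
    rcases hm with hS | hB
    · exact (hSS _ hS).2
    · obtain ⟨hω, hball⟩ := hB
      obtain ⟨hb1, hb2⟩ := coord_abs_le_of_norm hball
      set z : Site := γ (iU + 1 + (j:ℤ))
      have he1 : (((z - x).1 : ℤ) : ℝ) = ((z.1:ℤ):ℝ) - ((x.1:ℤ):ℝ) := by
        rw [Prod.fst_sub]; push_cast; ring
      have he2 : (((z - x).2 : ℤ) : ℝ) = ((z.2:ℤ):ℝ) - ((x.2:ℤ):ℝ) := by
        rw [Prod.snd_sub]; push_cast; ring
      rw [he1] at hb1
      rw [he2] at hb2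
      constructor
      · have := abs_sub_abs_le_abs_sub ((z.1:ℤ):ℝ) ((x.1:ℤ):ℝ)
        have h6 := hxA.1
        calc |((z.1:ℤ):ℝ)| ≤ |((z.1:ℤ):ℝ) - ((x.1:ℤ):ℝ)| + |((x.1:ℤ):ℝ)| := by
              have := abs_add_le (((z.1:ℤ):ℝ) - ((x.1:ℤ):ℝ)) ((x.1:ℤ):ℝ)
              simpa using this
          _ ≤ R₀ + MA := add_le_add hb1 h6
          _ ≤ Mf := by linarith
      · have h6 := hxA.2
        calc |((z.2:ℤ):ℝ)| ≤ |((z.2:ℤ):ℝ) - ((x.2:ℤ):ℝ)| + |((x.2:ℤ):ℝ)| := by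
              have := abs_add_le (((z.2:ℤ):ℝ) - ((x.2:ℤ):ℝ)) ((x.2:ℤ):ℝ)
              simpa using this
          _ ≤ R₀ + NA := add_le_add hb2 h6
          _ ≤ Nf := by linarith
  · show h / 2 ≤ δ * (((γ (iU + 1 + ((0:ℕ):ℤ))).2 : ℤ) : ℝ)
    have he : iU + 1 + ((0:ℕ):ℤ) = iU + 1 := by push_cast; ring
    rw [he]
    have hcast : ((u.2 : ℤ) : ℝ) ≤ (((γ (iU + 1)).2 : ℤ) : ℝ) := by exact_mod_cast hy0
    calc h / 2 ≤ δ * ((u.2 : ℤ) : ℝ) := hu2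
      _ ≤ δ * (((γ (iU + 1)).2 : ℤ) : ℝ) := mul_le_mul_of_nonneg_left hcast hδ.le
  · show δ * (((γ (iU + 1 + (((iD - iU - 2).toNat : ℕ) : ℤ))).2 : ℤ) : ℝ) ≤ -(h / 2)
    have he : iU + 1 + (((iD - iU - 2).toNat : ℕ) : ℤ) = iD - 1 := by omega
    rw [he]
    have hcast : (((γ (iD - 1)).2 : ℤ) : ℝ) ≤ ((v.2 : ℤ) : ℝ) := by exact_mod_cast hym
    calc δ * (((γ (iD - 1)).2 : ℤ) : ℝ) ≤ δ * ((v.2 : ℤ) : ℝ) :=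
          mul_le_mul_of_nonneg_left hcast hδ.le
      _ ≤ -(h / 2) := hv2

/-! ### The surgery step: removing one activation site -/

lemma adjZ2_negy {a b : Site} (h : adjZ2 a b) :
    adjZ2 (a.1, -a.2) (b.1, -b.2) := by
  rw [adjZ2_iff'] at h ⊢; simp only []; omega

lemma surgery {R₀ : ℝ} {φ : Config → Config} (hφ : IsEnhancement R₀ φ) (hmono : Monotonic φ)
    (hness : ¬ Essential adjZ2 φ)
    (ω : Config) (x : Site) (A' : Set Site)
    {δ h Mf Nf MA NA : ℝ} (hδ : 0 < δ) (hh : 0 < h)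
    (hxA : |((x.1 : ℤ) : ℝ)| ≤ MA ∧ |((x.2 : ℤ) : ℝ)| ≤ NA)
    (hMA : MA + R₀ ≤ Mf) (hNA : NA + R₀ ≤ Nf)
    {q : ℕ → Site} {m : ℕ}
    (hq : GoodF (ω ∪ Esets φ ω (insert x A')) δ h Mf Nf q m) :
    ∃ q' m', GoodF (ω ∪ Esets φ ω A') δ h Mf Nf q' m' := by
  classical
  obtain ⟨q1, m1, hq1, hmax, hsub⟩ := trim hδ hh hq
  obtain ⟨hc1, hinj1, hmem1, hbox1, htop1, hbot1⟩ := hq1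
  set u : Site := q1 0 with hu_def
  set v : Site := q1 m1 with hv_def
  obtain ⟨p, k, hpc, hp0, hpk, hpQ, hpinj, hpsr⟩ :=
    shortcut {z : Site | ∃ j, j ≤ m1 ∧ z = q1 j} u v q1 m1 hc1 rfl rfl
      (fun i hi => ⟨i, hi, rfl⟩)
  -- basic height facts
  have hu2 : h / 2 ≤ δ * ((u.2 : ℤ) : ℝ) := htop1
  have hv2 : δ * ((v.2 : ℤ) : ℝ) ≤ -(h / 2) := hbot1
  have hupos : 1 ≤ u.2 := by
    by_contra hcon
    push_neg at hcon
    have : ((u.2 : ℤ) : ℝ) ≤ 0 := by exact_mod_cast (by omega : u.2 ≤ 0)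
    nlinarith
  have hvneg : v.2 ≤ -1 := by
    by_contra hcon
    push_neg at hcon
    have : (0:ℝ) ≤ ((v.2 : ℤ) : ℝ) := by exact_mod_cast (by omega : 0 ≤ v.2)
    nlinarith
  -- properties of the self-repelling path p
  have hpy : ∀ i, i ≤ k → v.2 ≤ (p i).2 ∧ (p i).2 ≤ u.2 := by
    intro i hi
    obtain ⟨j, hj, hje⟩ := hpQ i hi
    rw [hje]
    exact ⟨(hmax j hj).2, (hmax j hj).1⟩
  have hpbox : ∀ i, i ≤ k → |(((p i).1 : ℤ) : ℝ)| ≤ Mf ∧ |(((p i).2 : ℤ) : ℝ)| ≤ Nf := by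
    intro i hi
    obtain ⟨j, hj, hje⟩ := hpQ i hi
    rw [hje]
    exact hbox1 j hj
  have hpW : ∀ i, i ≤ k → p i ∈ ω ∪ Esets φ ω (insert x A') := by
    intro i hi
    obtain ⟨j, hj, hje⟩ := hpQ i hi
    rw [hje]
    exact hmem1 j hj
  -- the geometric pieces
  set RayU : Config := {w : Site | w.1 = u.1 ∧ u.2 < w.2} with hRayU
  set RayD : Config := {w : Site | w.1 = v.1 ∧ w.2 < v.2} with hRayD
  set BallX : Config := {w : Site | w - x ∈ siteBall R₀} with hBallX
  set S0 : Config := {z : Site | (∃ i, i ≤ k ∧ p i = z) ∧ z ∈ ω ∪ Esets φ ω A'} with hS0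
  set Ω : Config := (S0 ∪ (ω ∩ BallX)) ∪ (RayU ∪ RayD) with hΩ
  have noadjUD : ∀ a ∈ RayU, ∀ b ∈ RayD, ¬ adjZ2 a b := by
    intro a ha b hb hadj
    have h1 := adjZ2_snd_close hadj
    have h2 : u.2 < a.2 := ha.2
    have h3 : b.2 < v.2 := hb.2
    obtain ⟨h4, h5⟩ := h1
    omega
  have hUDdisj : ∀ a, a ∈ RayU → a ∈ RayD → False := by
    intro a h1 h2
    have := h1.2; have := h2.2; omega
  -- the doubly infinite candidate path
  set γh : ℤ → Site := fun i =>
    if i < 0 then (u.1, u.2 - i)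
    else if i.toNat ≤ k then p i.toNat else (v.1, v.2 - (i - (k : ℤ))) with hγh
  have hγneg : ∀ i : ℤ, i < 0 → γh i = (u.1, u.2 - i) := by
    intro i hi; simp only [hγh, if_pos hi]
  have hγmid : ∀ i : ℤ, 0 ≤ i → i ≤ (k : ℤ) → γh i = p i.toNat := by
    intro i h1 h2
    simp only [hγh, if_neg (by omega : ¬ i < 0), if_pos (by omega : i.toNat ≤ k)]
  have hγhigh : ∀ i : ℤ, (k : ℤ) < i → γh i = (v.1, v.2 - (i - (k:ℤ))) := by
    intro i h1
    simp only [hγh, if_neg (by omega : ¬ i < 0), if_neg (by omega : ¬ i.toNat ≤ k)]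
  -- step adjacency
  have hγstep : ∀ i : ℤ, adjZ2 (γh i) (γh (i + 1)) := by
    intro i
    rcases lt_trichotomy i (-1) with h1 | h1 | h1
    · rw [hγneg i (by omega), hγneg (i+1) (by omega)]
      rw [adjZ2_iff']; dsimp only; omega
    · rw [h1]
      rw [hγneg (-1) (by omega)]
      have : (-1 : ℤ) + 1 = 0 := by omega
      rw [this, hγmid 0 le_rfl (by omega)]
      have h0 : (0 : ℤ).toNat = 0 := rfl
      rw [h0, hp0]
      rw [adjZ2_iff']; dsimp only; omega
    · -- i ≥ 0
      have hi0 : 0 ≤ i := by omega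
      rcases lt_trichotomy i (k : ℤ) with h2 | h2 | h2
      · rw [hγmid i hi0 (by omega), hγmid (i+1) (by omega) (by omega)]
        have : (i+1).toNat = i.toNat + 1 := by omega
        rw [this]
        exact hpc i.toNat (by omega)
      · rw [h2]
        rw [hγmid (k:ℤ) (by omega) le_rfl, hγhigh ((k:ℤ)+1) (by omega)]
        have : ((k:ℤ)).toNat = k := by omega
        rw [this, hpk]
        rw [adjZ2_iff']; dsimp only; omega
      · rw [hγhigh i h2, hγhigh (i+1) (by omega)]
        rw [adjZ2_iff']; dsimp only; omega
  -- self-repelling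
  have hγsr : ∀ i j : ℤ, i + 2 ≤ j → ¬ adjZ2 (γh i) (γh j) := by
    intro i j hij hadj
    rcases lt_or_ge i 0 with hi1 | hi1
    · rw [hγneg i hi1] at hadj
      rcases lt_or_ge j 0 with hj1 | hj1
      · rw [hγneg j hj1] at hadj
        have := adjZ2_snd_close hadj
        dsimp only at this
        omega
      · rcases le_or_gt j (k:ℤ) with hj2 | hj2
        · rw [hγmid j hj1 hj2] at hadj
          have hcl := adjZ2_snd_close hadj
          dsimp only at hcl
          have hpyj := hpy j.toNat (by omega)
          rcases lt_trichotomy i (-1) with h3 | h3 | h3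
          · omega
          · -- i = -1, forced p j.toNat = u
            rw [adjZ2_iff'] at hadj
            dsimp only at hadj
            have hfst : (p j.toNat).1 = u.1 := by omega
            have hsnd : (p j.toNat).2 = u.2 := by omega
            have : p j.toNat = p 0 := by
              rw [hp0]
              exact Prod.ext hfst hsnd
            have := hpinj j.toNat (by omega) 0 (by omega) this
            omega
          · omega
        · rw [hγhigh j hj2] at hadj
          have := adjZ2_snd_close hadj
          dsimp only at this
          omega
    · rcases le_or_gt i (k : ℤ) with hi2 | hi2
      · rw [hγmid i hi1 hi2] at hadj
        rcases le_or_gt j (k : ℤ) with hj2 | hj2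
        · rw [hγmid j (by omega) hj2] at hadj
          exact hpsr i.toNat j.toNat (by omega) (by omega) hadj
        · rw [hγhigh j hj2] at hadj
          have hcl := adjZ2_snd_close hadj
          dsimp only at hcl
          have hpyi := hpy i.toNat (by omega)
          -- forced: j = k+1 and p i.toNat = v
          rw [adjZ2_iff'] at hadj
          dsimp only at hadj
          have hfst : (p i.toNat).1 = v.1 := by omega
          have hsnd : (p i.toNat).2 = v.2 := by omega
          have : p i.toNat = p k := by
            rw [hpk]; exact Prod.ext hfst hsnd
          have := hpinj i.toNat (by omega) k le_rfl this
          omega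
      · rw [hγhigh i hi2, hγhigh j (by omega)] at hadj
        have := adjZ2_snd_close hadj
        dsimp only at this
        omega
  -- injectivity
  have hγinj : Function.Injective γh := by
    intro i j hij
    by_contra hne
    have key : ∀ a b : ℤ, a < b → γh a = γh b → False := by
      intro a b hab heq
      rcases lt_or_ge a 0 with ha1 | ha1
      · rw [hγneg a ha1] at heq
        rcases lt_or_ge b 0 with hb1 | hb1
        · rw [hγneg b hb1] at heq
          have := congrArg Prod.snd heq
          dsimp only at this
          omega
        · rcases le_or_gt b (k:ℤ) with hb2 | hb2
          · rw [hγmid b hb1 hb2] at heq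
            have := congrArg Prod.snd heq
            dsimp only at this
            have := (hpy b.toNat (by omega)).2
            omega
          · rw [hγhigh b hb2] at heq
            have := congrArg Prod.snd heq
            dsimp only at this
            omega
      · rcases le_or_gt a (k:ℤ) with ha2 | ha2
        · rw [hγmid a ha1 ha2] at heq
          rcases le_or_gt b (k:ℤ) with hb2 | hb2
          · rw [hγmid b (by omega) hb2] at heq
            have := hpinj a.toNat (by omega) b.toNat (by omega) heq
            omega
          · rw [hγhigh b hb2] at heq
            have := congrArg Prod.snd heq
            dsimp only at this
            have := (hpy a.toNat (by omega)).1
            omega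
        · rw [hγhigh a ha2, hγhigh b (by omega)] at heq
          have := congrArg Prod.snd heq
          dsimp only at this
          omega
    rcases lt_or_gt_of_ne hne with h1 | h1
    · exact key i j h1 hij
    · exact key j i h1 hij.symm
  -- membership
  have hγmem : ∀ i : ℤ, γh i ∈ Ω ∪ enhAt φ x Ω := by
    intro i
    rcases lt_or_ge i 0 with h1 | h1
    · left
      rw [hγneg i h1]
      right; left
      exact ⟨rfl, by omega⟩
    · rcases le_or_gt i (k:ℤ) with h2 | h2
      · rw [hγmid i h1 h2]
        rcases hpW i.toNat (by omega) with hω | hE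
        · left; left; left
          exact ⟨⟨i.toNat, by omega, rfl⟩, Or.inl hω⟩
        · obtain ⟨a, ha, henh⟩ := hE
          rcases Set.mem_insert_iff.mp ha with rfl | ha'
          · right
            have hsubΩ : enhAt φ a ω ⊆ enhAt φ a Ω := by
              apply enhAt_mono_local hφ hmono
              intro w hw hball
              left; right
              exact ⟨hw, hball⟩
            exact hsubΩ henh
          · left; left; left
            exact ⟨⟨i.toNat, by omega, rfl⟩, Or.inr ⟨a, ha', henh⟩⟩
      · left
        rw [hγhigh i h2]
        right; right
        exact ⟨rfl, by omega⟩
  -- apply non-essentiality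
  have hness' : ∀ ω₀ : Config, HasDISRPath adjZ2 (ω₀ ∪ φ ω₀) → HasDISRPath adjZ2 ω₀ := by
    intro ω₀ hd
    by_contra hnd
    exact hness ⟨ω₀, hnd, hd⟩
  have hDISR1 : HasDISRPath adjZ2 (shiftConfig x Ω ∪ φ (shiftConfig x Ω)) := by
    apply mkDISR (fun i => γh i - x)
    · intro a b hab
      apply hγinj
      have := congrArg (fun w => w + x) hab
      simpa using this
    · intro i
      rcases hγmem i with hΩm | hEm
      · left
        show γh i - x + x ∈ Ω
        simpa using hΩm
      · right
        exact mem_enhAt.mp hEm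
    · intro i
      exact adjZ2_shift.mpr (hγstep i)
    · intro i j hij hadj
      exact hγsr i j hij (adjZ2_shift.mp hadj)
  have hDISR3 : HasDISRPath adjZ2 Ω := DISR_unshift (hness' _ hDISR1)
  obtain ⟨γ0, hγ0I, hγ0M, hγ0iff⟩ := hDISR3
  have hstepγ0 : ∀ i : ℤ, adjZ2 (γ0 i) (γ0 (i + 1)) := fun i => (hγ0iff i (i+1)).mpr (Or.inl rfl)
  -- finiteness of the non-ray part of Ω
  have hS0fin : S0.Finite := by
    apply Set.Finite.subset (Set.Finite.image p (Set.finite_Iic k))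
    rintro z ⟨⟨i, hi, rfl⟩, -⟩
    exact ⟨i, hi, rfl⟩
  have hBallfin : BallX.Finite := by
    apply Set.Finite.subset (Set.Finite.image (fun z : Site => z + x) (siteBall_finite R₀))
    intro w hw
    exact ⟨w - x, hw, by simp⟩
  have hfin2 : (S0 ∪ (ω ∩ BallX)).Finite :=
    hS0fin.union (hBallfin.subset Set.inter_subset_right)
  have hJfin : {i : ℤ | γ0 i ∉ RayU ∪ RayD}.Finite := by
    apply Set.Finite.subset (Set.Finite.preimage (Function.Injective.injOn hγ0I)
      (hfin2 : (S0 ∪ (ω ∩ BallX)).Finite))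
    intro i hi
    have := hγ0M i
    rcases this with h1 | h1
    · exact h1
    · exact absurd h1 hi
  obtain ⟨bA, hbA⟩ := hJfin.bddAbove
  obtain ⟨bB, hbB⟩ := hJfin.bddBelow
  set N : ℤ := max 1 (max (bA + 1) (1 - bB)) with hNdef
  have hN1 : 1 ≤ N := le_max_left _ _
  have hNA' : bA + 1 ≤ N := le_trans (le_max_left _ _) (le_max_right _ _)
  have hNB' : 1 - bB ≤ N := le_trans (le_max_right _ _) (le_max_right _ _)
  have hNray : ∀ i : ℤ, N ≤ i ∨ i ≤ -N → γ0 i ∈ RayU ∪ RayD := by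
    intro i hi
    by_contra hcon
    rcases hi with h1 | h1
    · have := hbA (hcon : i ∈ {i : ℤ | γ0 i ∉ RayU ∪ RayD})
      omega
    · have := hbB (hcon : i ∈ {i : ℤ | γ0 i ∉ RayU ∪ RayD})
      omega
  -- tail constancy
  have tailUpN : ∀ n : ℕ,
      ((γ0 N ∈ RayU → γ0 (N + (n:ℤ)) ∈ RayU) ∧ (γ0 N ∈ RayD → γ0 (N + (n:ℤ)) ∈ RayD)) := by
    intro n
    induction n with
    | zero =>
      rw [show N + ((0:ℕ):ℤ) = N by push_cast; ring]
      exact ⟨id, id⟩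
    | succ n ih =>
      have hadj : adjZ2 (γ0 (N + (n:ℤ))) (γ0 (N + (n:ℤ) + 1)) := hstepγ0 _
      have hm2 : γ0 (N + (n:ℤ) + 1) ∈ RayU ∪ RayD := hNray _ (by left; omega)
      rw [show N + ((n + 1 : ℕ):ℤ) = N + (n:ℤ) + 1 by push_cast; ring]
      constructor
      · intro hU
        have h1 := ih.1 hU
        rcases hm2 with h2 | h2
        · exact h2
        · exact absurd hadj (noadjUD _ h1 _ h2)
      · intro hD
        have h1 := ih.2 hD
        rcases hm2 with h2 | h2
        · exact absurd (adjZ2_symm hadj) (noadjUD _ h2 _ h1)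
        · exact h2
  have tailUp : ∀ i, N ≤ i →
      ((γ0 N ∈ RayU → γ0 i ∈ RayU) ∧ (γ0 N ∈ RayD → γ0 i ∈ RayD)) := by
    intro i hi
    have h0 := tailUpN (i - N).toNat
    rw [show N + (((i - N).toNat : ℕ):ℤ) = i by omega] at h0
    exact h0
  have tailDnN : ∀ n : ℕ,
      ((γ0 (-N) ∈ RayU → γ0 (-N - (n:ℤ)) ∈ RayU) ∧
        (γ0 (-N) ∈ RayD → γ0 (-N - (n:ℤ)) ∈ RayD)) := by
    intro n
    induction n with
    | zero =>
      rw [show -N - ((0:ℕ):ℤ) = -N by push_cast; ring]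
      exact ⟨id, id⟩
    | succ n ih =>
      have hadj : adjZ2 (γ0 (-N - (n:ℤ) - 1)) (γ0 (-N - (n:ℤ))) := by
        have := hstepγ0 (-N - (n:ℤ) - 1)
        rwa [show -N - (n:ℤ) - 1 + 1 = -N - (n:ℤ) by ring] at this
      have hm2 : γ0 (-N - (n:ℤ) - 1) ∈ RayU ∪ RayD := hNray _ (by right; omega)
      rw [show -N - ((n + 1 : ℕ):ℤ) = -N - (n:ℤ) - 1 by push_cast; ring]
      constructor
      · intro hU
        have h1 := ih.1 hU
        rcases hm2 with h2 | h2
        · exact h2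
        · exact absurd (adjZ2_symm hadj) (noadjUD _ h1 _ h2)
      · intro hD
        have h1 := ih.2 hD
        rcases hm2 with h2 | h2
        · exact absurd hadj (noadjUD _ h2 _ h1)
        · exact h2
  have tailDn : ∀ i, i ≤ -N →
      ((γ0 (-N) ∈ RayU → γ0 i ∈ RayU) ∧ (γ0 (-N) ∈ RayD → γ0 i ∈ RayD)) := by
    intro i hi
    have h0 := tailDnN (-N - i).toNat
    rw [show -N - (((-N - i).toNat : ℕ):ℤ) = i by omega] at h0
    exact h0
  have hSSfact : ∀ z ∈ S0, z ∈ ω ∪ Esets φ ω A' ∧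
      |((z.1 : ℤ) : ℝ)| ≤ Mf ∧ |((z.2 : ℤ) : ℝ)| ≤ Nf := by
    rintro z ⟨⟨i, hi, rfl⟩, hW⟩
    exact ⟨hW, hpbox i hi⟩
  have hNm := hNray (-N) (Or.inr le_rfl)
  have hNp := hNray N (Or.inl le_rfl)
  rcases hNm with hmU | hmD <;> rcases hNp with hpU | hpD
  · -- both tails in RayU : impossible
    exfalso
    apply colContra γ0 hγ0I hstepγ0 u.1 (u.2 + 1) N hN1
    intro i hi
    have hiU : γ0 i ∈ RayU := by
      rcases hi with h1 | h1
      · exact (tailUp i h1).1 hpU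
      · exact (tailDn i h1).1 hmU
    exact ⟨hiU.1, by have := hiU.2; omega⟩
  · -- lower tail RayU, upper tail RayD : extract directly
    exact extract ω A' x u v hδ hh hu2 hv2 hupos hvneg hxA hMA hNA S0 hSSfact
      γ0 hγ0I hγ0iff hγ0M N hN1
      (fun i hi => (tailDn i hi).1 hmU)
      (fun i hi => (tailUp i hi).2 hpD)
  · -- lower tail RayD, upper tail RayU : extract from the reflected path
    refine extract ω A' x u v hδ hh hu2 hv2 hupos hvneg hxA hMA hNA S0 hSSfact
      (fun i => γ0 (-i)) (fun a b hab => by have := hγ0I hab; omega)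
      (fun i j => (hγ0iff (-i) (-j)).trans (by constructor <;> omega))
      (fun i => hγ0M (-i)) N hN1
      (fun i hi => (tailUp (-i) (by omega)).1 hpU)
      (fun i hi => (tailDn (-i) (by omega)).2 hmD)
  · -- both tails in RayD : impossible
    exfalso
    apply colContra (fun i => ((γ0 i).1, -(γ0 i).2))
      (fun a b hab => by
        have h1 : γ0 a = γ0 b := by
          have hf := congrArg Prod.fst hab
          have hs := congrArg Prod.snd hab
          dsimp only at hf hs
          exact Prod.ext hf (by omega)
        have := hγ0I h1
        omega)
      (fun i => adjZ2_negy (hstepγ0 i)) v.1 (-v.2 + 1) N hN1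
    intro i hi
    have hiD : γ0 i ∈ RayD := by
      rcases hi with h1 | h1
      · exact (tailUp i h1).2 hpD
      · exact (tailDn i h1).2 hmD
    exact ⟨hiD.1, by have := hiD.2; dsimp only; omega⟩

/-! ### Removing all activation sites -/

lemma Esets_empty (φ : Config → Config) (ω : Config) : Esets φ ω ∅ = ∅ := by
  ext y; simp [Esets]

lemma removeEnh {R₀ : ℝ} {φ : Config → Config} (hφ : IsEnhancement R₀ φ)
    (hmono : Monotonic φ) (hness : ¬ Essential adjZ2 φ) (ω : Config)
    {δ h Mf Nf MA NA : ℝ} (hδ : 0 < δ) (hh : 0 < h)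
    (hMA : MA + R₀ ≤ Mf) (hNA : NA + R₀ ≤ Nf)
    (A : Set Site) (hA : A.Finite)
    (hAbox : ∀ a ∈ A, |((a.1 : ℤ) : ℝ)| ≤ MA ∧ |((a.2 : ℤ) : ℝ)| ≤ NA)
    {q : ℕ → Site} {m : ℕ} (hq : GoodF (ω ∪ Esets φ ω A) δ h Mf Nf q m) :
    ∃ q' m', GoodF ω δ h Mf Nf q' m' := by
  classical
  have key : ∀ (B : Set Site), B.Finite →
      (∀ a ∈ B, |((a.1 : ℤ) : ℝ)| ≤ MA ∧ |((a.2 : ℤ) : ℝ)| ≤ NA) →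
      ∀ (q : ℕ → Site) (m : ℕ), GoodF (ω ∪ Esets φ ω B) δ h Mf Nf q m →
      ∃ q' m', GoodF ω δ h Mf Nf q' m' := by
    intro B hB
    refine Set.Finite.induction_on (motive := fun B _ => (∀ a ∈ B, |((a.1 : ℤ) : ℝ)| ≤ MA ∧
      |((a.2 : ℤ) : ℝ)| ≤ NA) → ∀ (q : ℕ → Site) (m : ℕ),
      GoodF (ω ∪ Esets φ ω B) δ h Mf Nf q m → ∃ q' m', GoodF ω δ h Mf Nf q' m') B hB ?_ ?_
    · intro _ q m hq
      have he : ω ∪ Esets φ ω ∅ = ω := by rw [Esets_empty]; simp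
      exact ⟨q, m, he ▸ hq⟩
    · intro a s _ hs ih hbox q m hq
      obtain ⟨q', m', hq'⟩ := surgery hφ hmono hness ω a s hδ hh
        (hbox a (Set.mem_insert _ _)) hMA hNA hq
      exact ih (fun b hb => hbox b (Set.mem_insert_of_mem _ hb)) q' m' hq'
  exact key A hA hAbox q m hq

/-! ### From an enhanced crossing to a good path -/

lemma adjZ2_coord_close {a b : Site} (h : adjZ2 a b) :
    (a.1 ≤ b.1 + 1 ∧ b.1 ≤ a.1 + 1) ∧ (a.2 ≤ b.2 + 1 ∧ b.2 ≤ a.2 + 1) := by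
  rw [adjZ2_iff'] at h; omega

lemma abs_cast_close {a c : ℤ} {M : ℝ} (h1 : a ≤ c + 1) (h2 : c ≤ a + 1)
    (hM : |((c : ℤ) : ℝ)| ≤ M) : |((a : ℤ) : ℝ)| ≤ M + 1 := by
  have h1' : ((a : ℤ) : ℝ) ≤ ((c : ℤ) : ℝ) + 1 := by exact_mod_cast h1
  have h2' : ((c : ℤ) : ℝ) ≤ ((a : ℤ) : ℝ) + 1 := by exact_mod_cast h2
  rw [abs_le] at *
  constructor <;> linarith [hM.1, hM.2]

lemma initial_extract {R₀ : ℝ} {φ : Config → Config} (hφ : IsEnhancement R₀ φ)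
    (ω : Config) (α : Site → Bool) {δ b h : ℝ} (hδ : 0 < δ) (hb : 0 < b) (hh : 0 < h)
    (hcross : VertCrossing adjZ2 (embedSq δ) (enhanced φ ω α) b h) :
    ∃ (A : Set Site), A.Finite ∧
      (∀ a ∈ A, |((a.1 : ℤ) : ℝ)| ≤ b/(2*δ) + R₀ + 2 ∧
        |((a.2 : ℤ) : ℝ)| ≤ h/(2*δ) + R₀ + 2) ∧
      ∃ q m, GoodF (ω ∪ Esets φ ω A) δ h (b/(2*δ) + 2*R₀ + 3) (h/(2*δ) + 2*R₀ + 3) q m := by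
  classical
  obtain ⟨n, x, hn, hadj, hinj, hmem, hrect, htop, hbot⟩ := hcross
  have hR₀ : 0 ≤ R₀ := hφ.1
  set A : Set Site := {a : Site | α a = true ∧
    |((a.1 : ℤ) : ℝ)| ≤ b/(2*δ) + R₀ + 2 ∧ |((a.2 : ℤ) : ℝ)| ≤ h/(2*δ) + R₀ + 2} with hA
  have hAfin : A.Finite := by
    apply (finite_box (b/(2*δ) + R₀ + 2) (h/(2*δ) + R₀ + 2)).subset
    intro a ha
    exact ⟨ha.2.1, ha.2.2⟩
  -- interior coordinate bounds
  have hint : ∀ j, 1 ≤ j → j ≤ n →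
      |(((x j).1 : ℤ) : ℝ)| ≤ b/(2*δ) ∧ |(((x j).2 : ℤ) : ℝ)| ≤ h/(2*δ) := by
    intro j h1 h2
    obtain ⟨r1, r2, r3, r4⟩ := hrect j h1 h2
    dsimp only [embedSq] at r1 r2 r3 r4
    constructor
    · rw [abs_le]
      constructor
      · rw [neg_le]
        rw [le_div_iff₀ (by positivity : (0:ℝ) < 2*δ)]
        nlinarith
      · rw [le_div_iff₀ (by positivity : (0:ℝ) < 2*δ)]
        nlinarith
    · rw [abs_le]
      constructor
      · rw [neg_le]
        rw [le_div_iff₀ (by positivity : (0:ℝ) < 2*δ)]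
        nlinarith
      · rw [le_div_iff₀ (by positivity : (0:ℝ) < 2*δ)]
        nlinarith
  have hbox : ∀ i, i ≤ n + 1 →
      |(((x i).1 : ℤ) : ℝ)| ≤ b/(2*δ) + 1 ∧ |(((x i).2 : ℤ) : ℝ)| ≤ h/(2*δ) + 1 := by
    intro i hi
    rcases Nat.eq_zero_or_pos i with rfl | hipos
    · have hcc := adjZ2_coord_close (hadj 0 (by omega))
      have h1 := hint 1 le_rfl hn
      exact ⟨abs_cast_close hcc.1.1 hcc.1.2 h1.1, abs_cast_close hcc.2.1 hcc.2.2 h1.2⟩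
    · rcases Nat.lt_or_ge i (n + 1) with hi2 | hi2
      · have h1 := hint i hipos (by omega)
        constructor
        · calc |(((x i).1 : ℤ) : ℝ)| ≤ b/(2*δ) := h1.1
            _ ≤ b/(2*δ) + 1 := by linarith
        · calc |(((x i).2 : ℤ) : ℝ)| ≤ h/(2*δ) := h1.2
            _ ≤ h/(2*δ) + 1 := by linarith
      · have hieq : i = n + 1 := by omega
        subst hieq
        have hcc := adjZ2_coord_close (hadj n le_rfl)
        have h1 := hint n hn le_rfl
        exact ⟨abs_cast_close hcc.1.2 hcc.1.1 h1.1, abs_cast_close hcc.2.2 hcc.2.1 h1.2⟩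
  -- height of the initial site
  have htop0 : h / 2 ≤ δ * (((x 0).2 : ℤ) : ℝ) := by
    obtain ⟨w, hwseg, hwtop⟩ := htop
    obtain ⟨t, ht0, ht1, hw⟩ := hwseg
    have hw2 : w.2 = h / 2 := hwtop.2
    have hsnd : w.2 = (1 - t) * (δ * (((x 0).2 : ℤ) : ℝ)) + t * (δ * (((x 1).2 : ℤ) : ℝ)) := by
      rw [hw]
      simp [embedSq, Prod.smul_mk, Prod.mk_add_mk, smul_eq_mul]
    have hx1 : δ * (((x 1).2 : ℤ) : ℝ) < h / 2 := by
      have := (hrect 1 le_rfl hn).2.2.2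
      dsimp only [embedSq] at this
      exact this
    by_contra hcon
    push_neg at hcon
    have e0 : (1 - t) * (δ * (((x 0).2 : ℤ) : ℝ)) + t * (δ * (((x 1).2 : ℤ) : ℝ)) = h / 2 :=
      hsnd.symm.trans hw2
    have e1 : 0 ≤ (1 - t) * (h/2 - δ * (((x 0).2 : ℤ) : ℝ)) :=
      mul_nonneg (by linarith) (by linarith)
    have e2 : 0 ≤ t * (h/2 - δ * (((x 1).2 : ℤ) : ℝ)) :=
      mul_nonneg ht0 (by linarith)
    have e3 : (1 - t) * (h/2 - δ * (((x 0).2 : ℤ) : ℝ)) +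
        t * (h/2 - δ * (((x 1).2 : ℤ) : ℝ)) = 0 := by linear_combination -e0
    have e4 : t * (h/2 - δ * (((x 1).2 : ℤ) : ℝ)) = 0 := by linarith
    have e5 : (1 - t) * (h/2 - δ * (((x 0).2 : ℤ) : ℝ)) = 0 := by linarith
    rcases mul_eq_zero.mp e4 with h5 | h5
    · rw [h5] at e5
      have : h/2 - δ * (((x 0).2 : ℤ) : ℝ) = 0 := by linarith [e5]
      linarith
    · linarith
  -- height of the final site
  have hbotm : δ * (((x (n + 1)).2 : ℤ) : ℝ) ≤ -(h / 2) := by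
    obtain ⟨w, hwseg, hwbot⟩ := hbot
    obtain ⟨t, ht0, ht1, hw⟩ := hwseg
    have hw2 : w.2 = -(h / 2) := hwbot.2
    have hsnd : w.2 = (1 - t) * (δ * (((x n).2 : ℤ) : ℝ)) +
        t * (δ * (((x (n+1)).2 : ℤ) : ℝ)) := by
      rw [hw]
      simp [embedSq, Prod.smul_mk, Prod.mk_add_mk, smul_eq_mul]
    have hxn : -(h / 2) < δ * (((x n).2 : ℤ) : ℝ) := by
      have := (hrect n hn le_rfl).2.2.1
      dsimp only [embedSq] at this
      exact this
    by_contra hcon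
    push_neg at hcon
    have e0 : (1 - t) * (δ * (((x n).2 : ℤ) : ℝ)) +
        t * (δ * (((x (n+1)).2 : ℤ) : ℝ)) = -(h / 2) := hsnd.symm.trans hw2
    have e1 : 0 ≤ (1 - t) * (δ * (((x n).2 : ℤ) : ℝ) + h/2) :=
      mul_nonneg (by linarith) (by linarith)
    have e2 : 0 ≤ t * (δ * (((x (n+1)).2 : ℤ) : ℝ) + h/2) :=
      mul_nonneg ht0 (by linarith)
    have e3 : (1 - t) * (δ * (((x n).2 : ℤ) : ℝ) + h/2) +
        t * (δ * (((x (n+1)).2 : ℤ) : ℝ) + h/2) = 0 := by linear_combination e0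
    have e4 : t * (δ * (((x (n+1)).2 : ℤ) : ℝ) + h/2) = 0 := by linarith
    rcases mul_eq_zero.mp e4 with h5 | h5
    · rw [h5] at e3
      have : (δ * (((x n).2 : ℤ) : ℝ) + h/2) = 0 := by linarith [e3]
      linarith
    · linarith
  -- assemble
  refine ⟨A, hAfin, fun a ha => ⟨ha.2.1, ha.2.2⟩, x, n + 1, ?_, ?_, ?_, ?_, htop0, hbotm⟩
  · intro i hi
    exact hadj i (by omega)
  · intro i hi j hj he
    exact hinj i hi j hj he
  · intro i hi
    rcases hmem i hi with hω | hE
    · exact Or.inl hω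
    · obtain ⟨a, hα, henh⟩ := hE
      have hball : x i - a ∈ siteBall R₀ := hφ.2.1 _ (mem_enhAt.mp henh)
      obtain ⟨hb1, hb2⟩ := coord_abs_le_of_norm hball
      rw [Prod.fst_sub] at hb1
      rw [Prod.snd_sub] at hb2
      have hxi := hbox i hi
      have haA : a ∈ A := by
        refine ⟨hα, ?_, ?_⟩
        · have e1 : (((x i).1 - a.1 : ℤ) : ℝ) = (((x i).1 : ℤ) : ℝ) - ((a.1 : ℤ) : ℝ) := by
            push_cast; ring
          rw [e1] at hb1
          have := abs_sub_abs_le_abs_sub ((a.1 : ℤ) : ℝ) (((x i).1 : ℤ) : ℝ)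
          have h6 : |((a.1 : ℤ) : ℝ) - (((x i).1 : ℤ) : ℝ)| ≤ R₀ := by
            rw [abs_sub_comm]; exact hb1
          calc |((a.1 : ℤ) : ℝ)| ≤ |(((x i).1 : ℤ) : ℝ)| + R₀ := by linarith
            _ ≤ b/(2*δ) + 1 + R₀ := by linarith [hxi.1]
            _ ≤ b/(2*δ) + R₀ + 2 := by linarith
        · have e2 : (((x i).2 - a.2 : ℤ) : ℝ) = (((x i).2 : ℤ) : ℝ) - ((a.2 : ℤ) : ℝ) := by
            push_cast; ring
          rw [e2] at hb2
          have h6 : |((a.2 : ℤ) : ℝ) - (((x i).2 : ℤ) : ℝ)| ≤ R₀ := by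
            rw [abs_sub_comm]; exact hb2
          have := abs_sub_abs_le_abs_sub ((a.2 : ℤ) : ℝ) (((x i).2 : ℤ) : ℝ)
          calc |((a.2 : ℤ) : ℝ)| ≤ |(((x i).2 : ℤ) : ℝ)| + R₀ := by linarith
            _ ≤ h/(2*δ) + 1 + R₀ := by linarith [hxi.2]
            _ ≤ h/(2*δ) + R₀ + 2 := by linarith
      exact Or.inr ⟨a, haA, henh⟩
  · intro i hi
    have := hbox i hi
    constructor
    · calc |(((x i).1 : ℤ) : ℝ)| ≤ b/(2*δ) + 1 := this.1
        _ ≤ b/(2*δ) + 2*R₀ + 3 := by linarith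
    · calc |(((x i).2 : ℤ) : ℝ)| ≤ h/(2*δ) + 1 := this.2
        _ ≤ h/(2*δ) + 2*R₀ + 3 := by linarith

/-! ### From a good path to a crossing of a slightly perturbed rectangle -/

lemma final_extract {R₀ : ℝ} (hR₀ : 0 ≤ R₀) (ω : Config) {δ b h ε : ℝ}
    (hδ : 0 < δ) (hb : 0 < b) (hh : 0 < h) (hε : 0 < ε) (hεh : ε < h)
    (hδ1 : δ * (2*R₀ + 3) < ε/2) (hδ2 : δ < h - ε)
    {q : ℕ → Site} {m : ℕ}
    (hq : GoodF ω δ h (b/(2*δ) + 2*R₀ + 3) (h/(2*δ) + 2*R₀ + 3) q m) :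
    VertCrossing adjZ2 (embedSq δ) ω (b + ε) (h - ε) := by
  classical
  obtain ⟨hc, hinj, hmem, hbox, htop, hbot⟩ := hq
  set t' : ℝ := (h - ε)/2 with ht'def
  have ht'pos : 0 < t' := by rw [ht'def]; linarith
  have ht'h : t' ≤ h/2 := by rw [ht'def]; linarith
  -- horizontal bound on embedded sites
  have hxb : ∀ i, i ≤ m → |δ * (((q i).1 : ℤ) : ℝ)| < (b + ε)/2 := by
    intro i hi
    have h1 := (hbox i hi).1
    rw [abs_mul, abs_of_pos hδ]
    calc δ * |(((q i).1 : ℤ) : ℝ)| ≤ δ * (b/(2*δ) + 2*R₀ + 3) := by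
          apply mul_le_mul_of_nonneg_left h1 hδ.le
      _ = b/2 + δ * (2*R₀ + 3) := by field_simp; ring
      _ < b/2 + ε/2 := by linarith
      _ = (b + ε)/2 := by ring
  -- first index set
  set F1 : Finset ℕ := (Finset.range (m+1)).filter
    (fun j => t' ≤ δ * (((q j).2 : ℤ) : ℝ)) with hF1
  have hF1ne : F1.Nonempty :=
    ⟨0, Finset.mem_filter.mpr ⟨Finset.mem_range.mpr (by omega), by linarith⟩⟩
  set j₁ : ℕ := F1.max' hF1ne with hj₁def
  have hj₁mem := Finset.mem_filter.mp (F1.max'_mem hF1ne)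
  have hj₁m : j₁ ≤ m := by
    have := Finset.mem_range.mp hj₁mem.1
    omega
  have hj₁v : t' ≤ δ * (((q j₁).2 : ℤ) : ℝ) := hj₁mem.2
  have hj₁max : ∀ j, j ≤ m → t' ≤ δ * (((q j).2 : ℤ) : ℝ) → j ≤ j₁ := by
    intro j h1 h2
    exact F1.le_max' j (Finset.mem_filter.mpr ⟨Finset.mem_range.mpr (by omega), h2⟩)
  have hj₁lt : j₁ < m := by
    rcases Nat.lt_or_ge j₁ m with h1 | h1
    · exact h1
    · exfalso
      have : j₁ = m := by omega
      rw [this] at hj₁v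
      linarith
  -- the step below j₁
  have hstep1 : δ * (((q (j₁+1)).2 : ℤ) : ℝ) < t' := by
    by_contra hcon
    push_neg at hcon
    have := hj₁max (j₁+1) (by omega) hcon
    omega
  have hadj1 := hc j₁ hj₁lt
  have hvert1 : (q (j₁+1)).1 = (q j₁).1 ∧ (q (j₁+1)).2 = (q j₁).2 - 1 := by
    rw [adjZ2_iff'] at hadj1
    rcases hadj1 with ⟨hsnd, _⟩ | ⟨hfst, hsnd⟩
    · exfalso
      rw [hsnd] at hj₁v
      linarith
    · constructor
      · omega
      · rcases hsnd with h1 | h1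
        · omega
        · exfalso
          have hcast : (((q (j₁+1)).2 : ℤ) : ℝ) = (((q j₁).2 : ℤ) : ℝ) + 1 := by
            exact_mod_cast h1
          nlinarith
  -- second index set
  set F2 : Finset ℕ := (Finset.range (m+1)).filter
    (fun j => j₁ < j ∧ δ * (((q j).2 : ℤ) : ℝ) ≤ -t') with hF2
  have hF2ne : F2.Nonempty :=
    ⟨m, Finset.mem_filter.mpr ⟨Finset.mem_range.mpr (by omega), hj₁lt, by linarith⟩⟩
  set j₂ : ℕ := F2.min' hF2ne with hj₂def
  have hj₂mem := Finset.mem_filter.mp (F2.min'_mem hF2ne)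
  have hj₂m : j₂ ≤ m := by
    have := Finset.mem_range.mp hj₂mem.1
    omega
  have hj₂gt : j₁ < j₂ := hj₂mem.2.1
  have hj₂v : δ * (((q j₂).2 : ℤ) : ℝ) ≤ -t' := hj₂mem.2.2
  have hj₂min : ∀ j, j ≤ m → j₁ < j → δ * (((q j).2 : ℤ) : ℝ) ≤ -t' → j₂ ≤ j := by
    intro j h1 h2 h3
    exact F2.min'_le j (Finset.mem_filter.mpr ⟨Finset.mem_range.mpr (by omega), h2, h3⟩)
  have hmidy : ∀ j, j₁ < j → j < j₂ → -t' < δ * (((q j).2 : ℤ) : ℝ) ∧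
      δ * (((q j).2 : ℤ) : ℝ) < t' := by
    intro j h1 h2
    constructor
    · by_contra hcon
      push_neg at hcon
      have := hj₂min j (by omega) h1 hcon
      omega
    · by_contra hcon
      push_neg at hcon
      have := hj₁max j (by omega) hcon
      omega
  have hgap : j₁ + 2 ≤ j₂ := by
    by_contra hcon
    push_neg at hcon
    have hj2eq : j₂ = j₁ + 1 := by omega
    have := hj₂v
    rw [hj2eq] at this
    have hy : (((q (j₁+1)).2 : ℤ) : ℝ) = (((q j₁).2 : ℤ) : ℝ) - 1 := by
      exact_mod_cast hvert1.2
    rw [hy] at this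
    -- δ * (y - 1) ≤ -t' but δ * y ≥ t', so 2 t' ≤ δ < h - ε = 2 t' : contradiction
    nlinarith
  -- the vertical step above j₂
  have hmid21 := hmidy (j₂ - 1) (by omega) (by omega)
  have hadj2 : adjZ2 (q (j₂ - 1)) (q (j₂ - 1 + 1)) := hc (j₂ - 1) (by omega)
  rw [show j₂ - 1 + 1 = j₂ by omega] at hadj2
  have hvert2 : (q j₂).1 = (q (j₂-1)).1 ∧ (q j₂).2 = (q (j₂-1)).2 - 1 := by
    rw [adjZ2_iff'] at hadj2
    rcases hadj2 with ⟨hsnd, _⟩ | ⟨hfst, hsnd⟩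
    · exfalso
      rw [hsnd] at hmid21
      linarith [hmid21.1]
    · constructor
      · omega
      · rcases hsnd with h1 | h1
        · omega
        · exfalso
          have hcast : (((q j₂).2 : ℤ) : ℝ) = (((q (j₂-1)).2 : ℤ) : ℝ) + 1 := by
            exact_mod_cast h1
          nlinarith [hmid21.1]
  -- assemble the crossing
  refine ⟨j₂ - j₁ - 1, fun i => q (j₁ + i), by omega, ?_, ?_, ?_, ?_, ?_, ?_⟩
  · intro i hi
    show adjZ2 (q (j₁ + i)) (q (j₁ + (i+1)))
    rw [show j₁ + (i+1) = (j₁ + i) + 1 by omega]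
    exact hc (j₁ + i) (by omega)
  · intro i hi j hj he
    have := hinj (j₁ + i) (by omega) (j₁ + j) (by omega) he
    omega
  · intro i hi
    exact hmem (j₁ + i) (by omega)
  · intro i h1i h2i
    have hy := hmidy (j₁ + i) (by omega) (by omega)
    have hx := hxb (j₁ + i) (by omega)
    rw [abs_lt] at hx
    exact ⟨by dsimp only [embedSq]; linarith [hx.1], by dsimp only [embedSq]; exact hx.2,
      by dsimp only [embedSq]; exact hy.1, by dsimp only [embedSq]; exact hy.2⟩
  · -- top segment
    set Y : ℝ := δ * (((q j₁).2 : ℤ) : ℝ) with hY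
    set X : ℝ := δ * (((q j₁).1 : ℤ) : ℝ) with hX
    have hy1 : δ * (((q (j₁+1)).2 : ℤ) : ℝ) = Y - δ := by
      have : (((q (j₁+1)).2 : ℤ) : ℝ) = (((q j₁).2 : ℤ) : ℝ) - 1 := by
        exact_mod_cast hvert1.2
      rw [this, hY]; ring
    have hx1 : δ * (((q (j₁+1)).1 : ℤ) : ℝ) = X := by
      have : (((q (j₁+1)).1 : ℤ) : ℝ) = (((q j₁).1 : ℤ) : ℝ) := by
        exact_mod_cast hvert1.1
      rw [this, hX]
    refine ⟨(X, t'), ⟨(Y - t')/δ, div_nonneg (by linarith [hj₁v]) hδ.le, ?_, ?_⟩, ?_⟩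
    · -- (Y - t')/δ ≤ 1
      rw [div_le_one hδ]
      have := hstep1
      rw [hy1] at this
      linarith
    · -- the point lies on the segment
      show (X, t') = (1 - (Y - t')/δ) • embedSq δ (q (j₁ + 0)) + ((Y - t')/δ) • embedSq δ (q (j₁ + 1))
      rw [show j₁ + 0 = j₁ by omega]
      dsimp only [embedSq]
      rw [Prod.smul_mk, Prod.smul_mk, Prod.mk_add_mk, smul_eq_mul, smul_eq_mul,
        smul_eq_mul, smul_eq_mul]
      rw [Prod.mk.injEq]
      constructor
      · rw [hx1, ← hX]; ring
      · rw [hy1, ← hY]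
        field_simp
        ring
    · -- membership in topSide
      show |(X, t').1| ≤ (b + ε)/2 ∧ (X, t').2 = (h - ε)/2
      refine ⟨?_, ht'def⟩
      have := hxb j₁ (by omega)
      rw [← hX] at this
      exact le_of_lt this
  · -- bottom segment
    set Y : ℝ := δ * (((q (j₂-1)).2 : ℤ) : ℝ) with hY
    set X : ℝ := δ * (((q (j₂-1)).1 : ℤ) : ℝ) with hX
    have hy2 : δ * (((q j₂).2 : ℤ) : ℝ) = Y - δ := by
      have : (((q j₂).2 : ℤ) : ℝ) = (((q (j₂-1)).2 : ℤ) : ℝ) - 1 := by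
        exact_mod_cast hvert2.2
      rw [this, hY]; ring
    have hx2 : δ * (((q j₂).1 : ℤ) : ℝ) = X := by
      have : (((q j₂).1 : ℤ) : ℝ) = (((q (j₂-1)).1 : ℤ) : ℝ) := by
        exact_mod_cast hvert2.1
      rw [this, hX]
    refine ⟨(X, -t'), ⟨(Y + t')/δ, ?_, ?_, ?_⟩, ?_⟩
    · -- 0 ≤ (Y + t')/δ
      apply div_nonneg _ hδ.le
      linarith [hmid21.1]
    · -- ≤ 1
      rw [div_le_one hδ]
      have := hj₂v
      rw [hy2] at this
      linarith
    · show (X, -t') = (1 - (Y + t')/δ) • embedSq δ (q (j₁ + (j₂ - j₁ - 1))) +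
        ((Y + t')/δ) • embedSq δ (q (j₁ + (j₂ - j₁ - 1 + 1)))
      rw [show j₁ + (j₂ - j₁ - 1) = j₂ - 1 by omega, show j₁ + (j₂ - j₁ - 1 + 1) = j₂ by omega]
      dsimp only [embedSq]
      rw [Prod.smul_mk, Prod.smul_mk, Prod.mk_add_mk, smul_eq_mul, smul_eq_mul,
        smul_eq_mul, smul_eq_mul]
      rw [Prod.mk.injEq]
      constructor
      · rw [hx2, ← hX]; ring
      · rw [hy2, ← hY]
        field_simp
        ring
    · show |(X, -t').1| ≤ (b + ε)/2 ∧ (X, -t').2 = -((h - ε)/2)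
      refine ⟨?_, by rw [ht'def]⟩
      have := hxb (j₂-1) (by omega)
      rw [← hX] at this
      exact le_of_lt this

/-! ### The pathwise comparison -/

lemma pathwise {R₀ : ℝ} {φ : Config → Config} (hφ : IsEnhancement R₀ φ)
    (hmono : Monotonic φ) (hness : ¬ Essential adjZ2 φ)
    (ω : Config) (α : Site → Bool) {δ b h ε : ℝ}
    (hδ : 0 < δ) (hb : 0 < b) (hh : 0 < h) (hε : 0 < ε) (hεh : ε < h)
    (hδ1 : δ * (2*R₀ + 3) < ε/2) (hδ2 : δ < h - ε)
    (hcross : VertCrossing adjZ2 (embedSq δ) (enhanced φ ω α) b h) :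
    VertCrossing adjZ2 (embedSq δ) ω (b + ε) (h - ε) := by
  obtain ⟨A, hAfin, hAbox, q, m, hq⟩ := initial_extract hφ ω α hδ hb hh hcross
  obtain ⟨q', m', hq'⟩ := removeEnh hφ hmono hness ω hδ hh
    (by linarith : (b/(2*δ) + R₀ + 2) + R₀ ≤ b/(2*δ) + 2*R₀ + 3)
    (by linarith : (h/(2*δ) + R₀ + 2) + R₀ ≤ h/(2*δ) + 2*R₀ + 3) A hAfin hAbox hq
  exact final_extract hφ.1 ω hδ hb hh hε hεh hδ1 hδ2 hq'

lemma VertCrossing_mono {adj : Site → Site → Prop} {emb : Site → ℝ × ℝ}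
    {ω ω' : Config} (hsub : ω ⊆ ω') {b h : ℝ} (hc : VertCrossing adj emb ω b h) :
    VertCrossing adj emb ω' b h := by
  obtain ⟨n, x, hn, h1, h2, h3, h4, h5, h6⟩ := hc
  exact ⟨n, x, hn, h1, h2, fun i hi => hsub (h3 i hi), h4, h5, h6⟩

lemma pc_mem (P : ℝ → Measure (Site → Bool)) : pcOf adjZ2 P ∈ Icc (0:ℝ) 1 := by
  unfold pcOf
  rcases Set.eq_empty_or_nonempty {p | p ∈ Icc (0:ℝ) 1 ∧ theta adjZ2 (P p) = 0} with hS | hS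
  · rw [hS, Real.sSup_empty]
    exact ⟨le_rfl, zero_le_one⟩
  · have hbdd : BddAbove {p | p ∈ Icc (0:ℝ) 1 ∧ theta adjZ2 (P p) = 0} :=
      ⟨1, fun p hp => hp.1.2⟩
    obtain ⟨p, hp⟩ := hS
    constructor
    · exact le_trans hp.1.1 (le_csSup hbdd hp)
    · exact csSup_le ⟨p, hp⟩ (fun r hr => hr.1.2)

/-! ### Statement 11 -/

theorem crossing_probabilities_unchanged_square'
    (P : ℝ → Measure (Site → Bool))
    (hP : ∀ p ∈ Icc (0:ℝ) 1, IsBernoulli p (P p))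
    (R₀ : ℝ) (φ : Config → Config) (hφ : IsEnhancement R₀ φ)
    (hmono : Monotonic φ) (hness : ¬ Essential adjZ2 φ)
    (s : ℝ) (hs : s ∈ Icc (0:ℝ) 1)
    (F : ℝ → ℝ) (hF : ContinuousOn F (Ioi 0))
    (hconv : ∀ b h : ℝ, 0 < b → 0 < h →
      Tendsto (fun δ => crossProb adjZ2 (embedSq δ) (P (pcOf adjZ2 P)) b h)
        (𝓝[>] 0) (𝓝 (F (b / h)))) :
    ∀ b h : ℝ, 0 < b → 0 < h →
      Tendsto (fun δ => crossProbEnh adjZ2 φ (embedSq δ) (P (pcOf adjZ2 P)) (P s) b h)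
        (𝓝[>] 0) (𝓝 (F (b / h))) := by
  intro b h hb hh
  have hR₀ : 0 ≤ R₀ := hφ.1
  set μ : Measure (Site → Bool) := P (pcOf adjZ2 P) with hμdef
  set ν : Measure (Site → Bool) := P s with hνdef
  haveI hμP : IsProbabilityMeasure μ := (hP _ (pc_mem P)).1
  haveI hνP : IsProbabilityMeasure ν := (hP s hs).1
  rw [Metric.tendsto_nhds]
  intro ε' hε'
  -- choose the rectangle perturbation ρ
  have hcont : Tendsto (fun ρ : ℝ => F ((b+ρ)/(h-ρ))) (𝓝[>] (0:ℝ)) (𝓝 (F (b/h))) := by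
    have h1 : Tendsto (fun ρ : ℝ => (b+ρ)/(h-ρ)) (𝓝[>] (0:ℝ)) (𝓝 (b/h)) := by
      have hca : ContinuousAt (fun ρ : ℝ => (b+ρ)/(h-ρ)) 0 := by
        apply ContinuousAt.div
        · fun_prop
        · fun_prop
        · simpa using hh.ne'
      have := hca.continuousWithinAt (s := Set.Ioi (0:ℝ))
      simpa using this.tendsto
    have h2 : ∀ᶠ ρ in 𝓝[>] (0:ℝ), (fun ρ : ℝ => (b+ρ)/(h-ρ)) ρ ∈ Ioi (0:ℝ) := by
      filter_upwards [Ioo_mem_nhdsGT_of_mem (Set.mem_Ico.mpr ⟨le_rfl, half_pos hh⟩)] with ρ hρ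
      have h3 : 0 < b + ρ := by have := hρ.1; linarith
      have h4 : 0 < h - ρ := by have := hρ.2; linarith
      exact div_pos h3 h4
    exact ((hF.continuousWithinAt (Set.mem_Ioi.mpr (by positivity : (0:ℝ) < b/h))).tendsto.comp
      (tendsto_nhdsWithin_iff.mpr ⟨h1, h2⟩))
  have hev1 : ∀ᶠ ρ in 𝓝[>] (0:ℝ), F ((b+ρ)/(h-ρ)) < F (b/h) + ε'/2 :=
    hcont (Iio_mem_nhds (by linarith))
  have hev2 : ∀ᶠ ρ in 𝓝[>] (0:ℝ), ρ ∈ Set.Ioo (0:ℝ) (h/2) :=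
    Ioo_mem_nhdsGT_of_mem (Set.mem_Ico.mpr ⟨le_rfl, half_pos hh⟩)
  obtain ⟨ρ, hρF, hρ0, hρh2⟩ := (hev1.and hev2).exists
  have hρpos : 0 < ρ := hρ0
  have hρh : ρ < h := by linarith [hρh2]
  -- the two crossing probability limits
  have hlow := Metric.tendsto_nhds.mp (hconv b h hb hh) ε' hε'
  have hup := Metric.tendsto_nhds.mp (hconv (b+ρ) (h-ρ) (by linarith) (by linarith))
    (ε'/2) (by linarith)
  have hδsmall : ∀ᶠ δ in 𝓝[>] (0:ℝ),
      δ ∈ Set.Ioo (0:ℝ) (min (ρ/(4*R₀ + 7)) (h - ρ)) :=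
    Ioo_mem_nhdsGT_of_mem (Set.mem_Ico.mpr ⟨le_rfl, by
      apply lt_min
      · positivity
      · linarith⟩)
  filter_upwards [hlow, hup, hδsmall] with δ hd1 hd2 hd3
  obtain ⟨hδpos, hδlt⟩ := hd3
  have hδ1 : δ * (2*R₀ + 3) < ρ/2 := by
    have h1 : δ < ρ/(4*R₀ + 7) := lt_of_lt_of_le hδlt (min_le_left _ _)
    have h2 : δ * (4*R₀ + 7) < ρ := by
      rw [← lt_div_iff₀ (by positivity : (0:ℝ) < 4*R₀ + 7)]
      exact h1
    nlinarith
  have hδ2 : δ < h - ρ := lt_of_lt_of_le hδlt (min_le_right _ _)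
  -- event inclusions
  set EL : Set ((Site → Bool) × (Site → Bool)) :=
    {ηα | VertCrossing adjZ2 (embedSq δ) (toConfig ηα.1) b h} with hEL
  set EE : Set ((Site → Bool) × (Site → Bool)) :=
    {ηα | VertCrossing adjZ2 (embedSq δ) (enhanced φ (toConfig ηα.1) ηα.2) b h} with hEE
  set EU : Set ((Site → Bool) × (Site → Bool)) :=
    {ηα | VertCrossing adjZ2 (embedSq δ) (toConfig ηα.1) (b+ρ) (h-ρ)} with hEU
  have hincl1 : EL ⊆ EE := by
    intro ηα hηα
    exact VertCrossing_mono Set.subset_union_left hηα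
  have hincl2 : EE ⊆ EU := by
    intro ηα hηα
    exact pathwise hφ hmono hness (toConfig ηα.1) ηα.2 hδpos hb hh hρpos hρh hδ1 hδ2 hηα
  -- marginal identities
  have hmarg : ∀ (S : Set (Site → Bool)),
      (μ.prod ν) {ηα : (Site → Bool) × (Site → Bool) | ηα.1 ∈ S} = μ S := by
    intro S
    have he : {ηα : (Site → Bool) × (Site → Bool) | ηα.1 ∈ S} = S ×ˢ Set.univ := by
      ext p; simp [Set.mem_prod]
    rw [he, Measure.prod_prod, measure_univ, mul_one]
  have hprodfin : (μ.prod ν) EE ≠ ⊤ := measure_ne_top _ _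
  -- the sandwich
  have hsand1 : crossProb adjZ2 (embedSq δ) μ b h ≤
      crossProbEnh adjZ2 φ (embedSq δ) μ ν b h := by
    unfold crossProb crossProbEnh
    apply ENNReal.toReal_mono hprodfin
    have := hmarg {η | VertCrossing adjZ2 (embedSq δ) (toConfig η) b h}
    rw [← this]
    exact measure_mono hincl1
  have hsand2 : crossProbEnh adjZ2 φ (embedSq δ) μ ν b h ≤
      crossProb adjZ2 (embedSq δ) μ (b+ρ) (h-ρ) := by
    unfold crossProb crossProbEnh
    have h2 := hmarg {η | VertCrossing adjZ2 (embedSq δ) (toConfig η) (b+ρ) (h-ρ)}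
    rw [← h2]
    apply ENNReal.toReal_mono (by rw [h2]; exact measure_ne_top _ _)
    exact measure_mono hincl2
  -- conclude
  rw [Real.dist_eq] at hd1 hd2 ⊢
  rw [abs_lt] at hd1 hd2 ⊢
  constructor
  · have := hd1.1
    linarith [hsand1]
  · have := hd2.2
    linarith [hsand2, hρF]


/-- for a monotonic nonessential enhancement of site percolation on
`ℤ²` and `s ∈ [0,1]`, if the crossing probabilities of independent critical site
percolation converge as `δ → 0` to a continuous function `F` of the aspect ratio,
then the crossing probabilities of the enhanced process have the same scaling limit. -/
theorem crossing_probabilities_unchanged_square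
    (P : ℝ → Measure (Site → Bool))
    (hP : ∀ p ∈ Icc (0:ℝ) 1, IsBernoulli p (P p))
    (R₀ : ℝ) (φ : Config → Config) (hφ : IsEnhancement R₀ φ)
    (hmono : Monotonic φ) (hness : ¬ Essential adjZ2 φ)
    (s : ℝ) (hs : s ∈ Icc (0:ℝ) 1)
    (F : ℝ → ℝ) (hF : ContinuousOn F (Ioi 0))
    (hconv : ∀ b h : ℝ, 0 < b → 0 < h →
      Tendsto (fun δ => crossProb adjZ2 (embedSq δ) (P (pcOf adjZ2 P)) b h)
        (𝓝[>] 0) (𝓝 (F (b / h)))) :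
    ∀ b h : ℝ, 0 < b → 0 < h →
      Tendsto (fun δ => crossProbEnh adjZ2 φ (embedSq δ) (P (pcOf adjZ2 P)) (P s) b h)
        (𝓝[>] 0) (𝓝 (F (b / h))) :=
  crossing_probabilities_unchanged_square' P hP R₀ φ hφ hmono hness s hs F hF hconv

end PercEnh
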